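/- arXiv:2210.04667 — 3 statements merged into one kernel-verified Lean document; each statement's English description precedes it below -/
import Mathlib

section
/- Suppose ℙ(γ* = 0) = 0, that x, y : ℝ₊ → ℝ₊ are nonnegative, measurable, and locally integrable with ∫₀^∞ y(t) dt = ∞, and that for all t ≥ 0 one has ∫₀ᵗ 𝔼[exp(−γ*·∫ₛᵗ y(r) dr)]·x(s) y(s) ds ≤ 1. Then limsup_{t→∞} (∫₀ᵗ x(s) y(s) ds)/(∫₀ᵗ y(s) ds) ≤ 1/𝔼[1/γ*], where the right-hand side is interpreted as 0 when 𝔼[1/γ*] = ∞. -/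
open MeasureTheory Filter Set ProbabilityTheory
open scoped ENNReal

noncomputable section

/-- A real function is càdlàg on `[0, ∞)`: right-continuous on `[0,∞)` with left limits. -/
def Cadlag (f : ℝ → ℝ) : Prop :=
  (∀ t : ℝ, 0 ≤ t → ContinuousWithinAt f (Set.Ici t) t) ∧
  (∀ t : ℝ, 0 < t → ∃ l : ℝ, Filter.Tendsto f (nhdsWithin t (Set.Iio t)) (nhds l))

variable {Ω : Type*} [MeasurableSpace Ω]

/-- `η(ω) = sup {t ≥ 0 : λ(ω,t) > 0}`, with the convention `sup ∅ = 0`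
(which is the junk value of `sSup` on `ℝ`). -/
def etaSup (lam : Ω → ℝ → ℝ) (ω : Ω) : ℝ :=
  sSup {t : ℝ | 0 ≤ t ∧ 0 < lam ω t}

/-- `γ* (ω) = lim_{t → ∞} γ(ω,t) = sup_{t ≥ 0} γ(ω,t)` for a.s. non-decreasing bounded `γ`. -/
def gamStar (gam : Ω → ℝ → ℝ) (ω : Ω) : ℝ :=
  sSup (gam ω '' Set.Ici (0:ℝ))

/-- `λ̄(t) = 𝔼[λ(t)]`. -/
def lamBar (P : Measure Ω) (lam : Ω → ℝ → ℝ) (t : ℝ) : ℝ :=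
  ∫ ω, lam ω t ∂P

/-- `Ī(0) = ℙ(η₀ > 0)`. -/
def IbarZero (P : Measure Ω) (lam0 : Ω → ℝ → ℝ) : ℝ :=
  (P {ω | 0 < etaSup lam0 ω}).toReal

/-- `λ̄₀(t) = 𝔼[λ₀(t) | η₀ > 0]`. -/
def lamBarZero (P : Measure Ω) (lam0 : Ω → ℝ → ℝ) (t : ℝ) : ℝ :=
  (∫ ω in {ω | 0 < etaSup lam0 ω}, lam0 ω t ∂P) / IbarZero P lam0

/-- `F₀ᶜ(t) = ℙ(η₀ > t | η₀ > 0)`. -/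
def FZeroc (P : Measure Ω) (lam0 : Ω → ℝ → ℝ) (t : ℝ) : ℝ :=
  (P {ω | t < etaSup lam0 ω}).toReal / IbarZero P lam0

/-- `Fᶜ(t) = ℙ(η > t)`. -/
def survFc (P : Measure Ω) (lam : Ω → ℝ → ℝ) (t : ℝ) : ℝ :=
  (P {ω | t < etaSup lam ω}).toReal

/-- `R₀ = ∫₀^∞ λ̄(t) dt`. -/
def Rnought (P : Measure Ω) (lam : Ω → ℝ → ℝ) : ℝ :=
  ∫ t in Set.Ioi (0:ℝ), lamBar P lam t

/-- `𝔼[1/γ*] ∈ (0,∞]`, with the convention `1/0 = ∞`. -/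
def EinvGamStar (P : Measure Ω) (gam : Ω → ℝ → ℝ) : ℝ≥0∞ :=
  ∫⁻ ω, (ENNReal.ofReal (gamStar gam ω))⁻¹ ∂P

/-- The pair of integral equations defining the limit epidemic system. -/
def SolvesLimitSystem (P : Measure Ω) (lam0 gam0 lam gam : Ω → ℝ → ℝ)
    (S F : ℝ → ℝ) : Prop :=
  (∀ t : ℝ, 0 ≤ t →
    S t = (∫ ω, gam0 ω t * Real.exp (- ∫ r in (0:ℝ)..t, gam0 ω r * F r) ∂P)
      + ∫ s in (0:ℝ)..t,
          (∫ ω, gam ω (t - s) * Real.exp (- ∫ r in s..t, gam ω (r - s) * F r) ∂P)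
            * (S s * F s)) ∧
  (∀ t : ℝ, 0 ≤ t →
    F t = IbarZero P lam0 * lamBarZero P lam0 t
      + ∫ s in (0:ℝ)..t, lamBar P lam (t - s) * (S s * F s))

/-- A solution of the limit epidemic system with càdlàg nonnegative components. -/
def IsLimitSolution (P : Measure Ω) (lam0 gam0 lam gam : Ω → ℝ → ℝ)
    (S F : ℝ → ℝ) : Prop :=
  Cadlag S ∧ Cadlag F ∧ (∀ t : ℝ, 0 ≤ t → 0 ≤ S t ∧ 0 ≤ F t) ∧
  SolvesLimitSystem P lam0 gam0 lam gam S F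

/-- The standing assumptions on the random infectivity/susceptibility functions:
measurability, càdlàg paths, the bounds `0 ≤ λ₀, λ ≤ λ*`, `0 ≤ γ₀, γ ≤ 1`, and the a.s.
support condition `sup{t : λ(t) > 0} ≤ inf{t : γ(t) > 0}` (for both pairs). -/
def BaseContext (P : Measure Ω) (lamStar : ℝ) (lam0 gam0 lam gam : Ω → ℝ → ℝ) : Prop :=
  0 < lamStar ∧
  Measurable (Function.uncurry lam0) ∧ Measurable (Function.uncurry gam0) ∧
  Measurable (Function.uncurry lam) ∧ Measurable (Function.uncurry gam) ∧
  (∀ᵐ ω ∂P, Cadlag (lam0 ω) ∧ Cadlag (gam0 ω) ∧ Cadlag (lam ω) ∧ Cadlag (gam ω)) ∧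
  (∀ᵐ ω ∂P, ∀ t : ℝ, 0 ≤ t →
    lam0 ω t ∈ Set.Icc 0 lamStar ∧ lam ω t ∈ Set.Icc 0 lamStar ∧
    gam0 ω t ∈ Set.Icc (0:ℝ) 1 ∧ gam ω t ∈ Set.Icc (0:ℝ) 1) ∧
  (∀ᵐ ω ∂P, ∀ s t : ℝ, 0 ≤ s → 0 ≤ t → 0 < lam ω s → 0 < gam ω t → s ≤ t) ∧
  (∀ᵐ ω ∂P, ∀ s t : ℝ, 0 ≤ s → 0 ≤ t → 0 < lam0 ω s → 0 < gam0 ω t → s ≤ t)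

/-- Assumption (I): `γ` and `γ₀` have a.s. non-decreasing paths, and `(λ₀, γ₀)` is built from
an independent pair `(λ̃, γ̃) ~ (λ, γ)`, an age `ξ ∈ [0, η̃]` and a Bernoulli variable `χ`
with `ℙ(χ = 1) = Ī(0)`, via `λ₀(t) = χ λ̃(t+ξ)` and `γ₀(t) = (1-χ) + χ γ̃(t+ξ)`. -/
def AssumptionI (P : Measure Ω) (lam0 gam0 lam gam : Ω → ℝ → ℝ) : Prop :=
  (∀ᵐ ω ∂P, MonotoneOn (gam ω) (Set.Ici 0) ∧ MonotoneOn (gam0 ω) (Set.Ici 0)) ∧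
  ∃ (lamT gamT : Ω → ℝ → ℝ) (xi chi : Ω → ℝ),
    Measurable (fun ω => (lamT ω, gamT ω)) ∧ Measurable xi ∧ Measurable chi ∧
    Measure.map (fun ω => (lamT ω, gamT ω)) P = Measure.map (fun ω => (lam ω, gam ω)) P ∧
    (∀ᵐ ω ∂P, 0 ≤ xi ω ∧ xi ω ≤ etaSup lamT ω) ∧
    (∀ ω, chi ω = 0 ∨ chi ω = 1) ∧
    P {ω | chi ω = 1} = P {ω | 0 < etaSup lam0 ω} ∧
    IndepFun chi (fun ω => (lamT ω, gamT ω, xi ω)) P ∧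
    (∀ᵐ ω ∂P, ∀ t : ℝ, 0 ≤ t →
      lam0 ω t = chi ω * lamT ω (t + xi ω) ∧
      gam0 ω t = (1 - chi ω) + chi ω * gamT ω (t + xi ω))

/-- Assumption (II): there is a nonnegative integrable random time `t*` such that a.s.
`γ(t) ≥ γ*/2` for all `t ≥ t*`. -/
def AssumptionII (P : Measure Ω) (gam : Ω → ℝ → ℝ) : Prop :=
  ∃ tstar : Ω → ℝ, Measurable tstar ∧ (∀ᵐ ω ∂P, 0 ≤ tstar ω) ∧ Integrable tstar P ∧
    ∀ᵐ ω ∂P, ∀ t : ℝ, tstar ω ≤ t → gamStar gam ω / 2 ≤ gam ω t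

/-- Assumption (III): `γ*` is deterministic, and for any `δ ∈ (0,1)` there is a deterministic
`t_δ > 0` with `min(γ₀(t_δ), γ(t_δ)) ≥ (1-δ) γ*` a.s. -/
def AssumptionIII (P : Measure Ω) (gam0 gam : Ω → ℝ → ℝ) : Prop :=
  (∃ c : ℝ, ∀ᵐ ω ∂P, gamStar gam ω = c) ∧
  (∀ δ : ℝ, δ ∈ Set.Ioo (0:ℝ) 1 → ∃ tδ : ℝ, 0 < tδ ∧
    ∀ᵐ ω ∂P, (1 - δ) * gamStar gam ω ≤ min (gam0 ω tδ) (gam ω tδ))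

/-- Assumption (IV): there is a positive decreasing `h` with `h(0) = 1` and
`λ̄(s+t) ≥ h(s) λ̄(t)`, `λ̄₀(s+t) ≥ h(s) λ̄₀(t)`; moreover `λ̄₀` is continuous. -/
def AssumptionIV (lamBarF lamBarZeroF : ℝ → ℝ) : Prop :=
  (∃ h : ℝ → ℝ, (∀ s : ℝ, 0 ≤ s → 0 < h s) ∧ AntitoneOn h (Set.Ici 0) ∧ h 0 = 1 ∧
    ∀ s t : ℝ, 0 ≤ s → 0 ≤ t →
      h s * lamBarF t ≤ lamBarF (s + t) ∧ h s * lamBarZeroF t ≤ lamBarZeroF (s + t)) ∧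
  ContinuousOn lamBarZeroF (Set.Ici 0)

/-- `H(x) = ∫₀^∞ 𝔼[exp(−∫₀ˢ γ(r/x) dr)] ds`. -/
def Hfun (P : Measure Ω) (gam : Ω → ℝ → ℝ) (x : ℝ) : ℝ :=
  ∫ s in Set.Ioi (0:ℝ), ∫ ω, Real.exp (- ∫ r in (0:ℝ)..s, gam ω (r / x)) ∂P

/-- `Ī(t) = Ī(0) F₀ᶜ(t) + ∫₀ᵗ Fᶜ(t-s) S̄(s) F̄(s) ds`. -/
def IbarFun (P : Measure Ω) (lam0 lam : Ω → ℝ → ℝ) (S F : ℝ → ℝ) (t : ℝ) : ℝ :=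
  IbarZero P lam0 * FZeroc P lam0 t
    + ∫ s in (0:ℝ)..t, survFc P lam (t - s) * (S s * F s)

/-- The SIRS integral system of the Kermack–McKendrick model (deterministic data). -/
def SolvesSIRSIntegral (lamT gamT muF Fcs I0 R0f : ℝ → ℝ) (S0 : ℝ)
    (S F : ℝ → ℝ) : Prop :=
  ∀ t : ℝ, 0 ≤ t →
    (S t = S0 * Real.exp (- ∫ r in (0:ℝ)..t, F r)
      + (∫ τ in (0:ℝ)..t, ∫ r in Set.Ioi (0:ℝ),
          gamT (t - τ) * muF (τ + r) * I0 r * Real.exp (- ∫ s in r..(τ + r), muF s)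
            * Real.exp (- ∫ s in τ..t, gamT (s - τ) * F s))
      + (∫ τ in Set.Ioi (0:ℝ),
          gamT (t + τ) * R0f τ * Real.exp (- ∫ s in (0:ℝ)..t, gamT (s + τ) * F s))
      + (∫ r in (0:ℝ)..t,
          (∫ τ in (0:ℝ)..(t - r),
            gamT (t - r - τ) * muF τ * Fcs τ
              * Real.exp (- ∫ s in (τ + r)..t, gamT (s - r - τ) * F s)) * (S r * F r))) ∧
    (F t = (∫ τ in Set.Ioi (0:ℝ), lamT (t + τ) * I0 τ * Real.exp (- ∫ s in τ..(t + τ), muF s))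
      + ∫ τ in (0:ℝ)..t, lamT (t - τ) * (S τ * F τ)
          * Real.exp (- ∫ s in (0:ℝ)..(t - τ), muF s))

/-- `Ī(t,τ)` built from a solution of the SIRS integral system. -/
def IbDef (I0 Fcs S F : ℝ → ℝ) (t τ : ℝ) : ℝ :=
  if t < τ then I0 (τ - t) * Fcs τ / Fcs (τ - t) else F (t - τ) * S (t - τ) * Fcs τ

/-- `R̄(t,0)` built from a solution of the SIRS integral system. -/
def RzeroDef (I0 fd Fcs S F : ℝ → ℝ) (t : ℝ) : ℝ :=
  (∫ τ in Set.Ioi (0:ℝ), I0 τ * fd (t + τ) / Fcs τ)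
    + ∫ τ in (0:ℝ)..t, fd (t - τ) * (S τ * F τ)

/-- `R̄(t,θ)` built from a solution of the SIRS integral system. -/
def RbDef (I0 R0f fd gamT Fcs S F : ℝ → ℝ) (t θ : ℝ) : ℝ :=
  if θ < t then
    RzeroDef I0 fd Fcs S F (t - θ) * Real.exp (- ∫ s in (0:ℝ)..θ, gamT s * F (t + s - θ))
  else R0f (θ - t) * Real.exp (- ∫ s in (θ - t)..θ, gamT s * F (t - θ + s))

/-- `S̄(t)` built from a solution of the SIRS integral system. -/
def SbDef (S0 : ℝ) (F : ℝ → ℝ) (t : ℝ) : ℝ :=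
  S0 * Real.exp (- ∫ r in (0:ℝ)..t, F r)


section AuxForStatement14

open intervalIntegral

private lemma aux_integral_exp_neg {g : ℝ} (hg : 0 < g) (M : ℝ) :
    ∫ u in (0:ℝ)..M, Real.exp (-(g * u)) = (1 - Real.exp (-(g * M))) / g := by
  have hd : ∀ u ∈ Set.uIcc (0:ℝ) M,
      HasDerivAt (fun v => -(Real.exp (-(g * v)) / g)) (Real.exp (-(g * u))) u := by
    intro u _
    have h1 : HasDerivAt (fun v : ℝ => -(g * v)) (-g) u := by
      have h := ((hasDerivAt_id u).const_mul g).neg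
      simp at h
      exact h
    have h2 := (h1.exp.div_const g).neg
    convert h2 using 1
    · rfl
    · rfl
    · rfl
    · field_simp
  have hci : IntervalIntegrable (fun u => Real.exp (-(g * u))) volume 0 M :=
    (Real.continuous_exp.comp (by continuity)).intervalIntegrable _ _
  rw [intervalIntegral.integral_eq_sub_of_hasDerivAt hd hci]
  simp [Real.exp_zero]
  field_simp
  ring

private lemma aux_ind_one_mul {S : Set ℝ} {g : ℝ → ℝ≥0∞} (v : ℝ) :
    S.indicator (fun _ => (1:ℝ≥0∞)) v * g v = S.indicator g v := by
  by_cases h : v ∈ S <;> simp [h]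

private lemma aux_riemann_lower
    {k Y y' : ℝ → ℝ} (hk_cont : Continuous k) (hk_anti : Antitone k)
    (hk_nonneg : ∀ u, 0 ≤ k u) (hk_le_one : k 0 ≤ 1)
    (hy'_nonneg : ∀ t, 0 ≤ y' t)
    (hy'_int : ∀ a b : ℝ, IntervalIntegrable y' volume a b)
    (hY : ∀ a b : ℝ, Y b - Y a = ∫ t in a..b, y' t)
    (hYc : Continuous Y)
    {s τ M : ℝ} (hsτ : s ≤ τ) (hM : 0 ≤ M) (hM' : M ≤ Y τ - Y s) :
    (∫ u in (0:ℝ)..M, k u) ≤ ∫ t in s..τ, k (Y t - Y s) * y' t := by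
  have hYmono : Monotone Y := by
    intro a b hab
    have h := hY a b
    have h2 : 0 ≤ ∫ t in a..b, y' t :=
      intervalIntegral.integral_nonneg hab (fun t _ => hy'_nonneg t)
    linarith
  have h_int : ∀ a b : ℝ, IntervalIntegrable (fun t => k (Y t - Y s) * y' t) volume a b :=
    fun a b => (hy'_int a b).continuousOn_mul
      ((hk_cont.comp (hYc.sub continuous_const)).continuousOn)
  set J := ∫ t in s..τ, k (Y t - Y s) * y' t with hJ
  have hJ_ge : ∀ n : ℕ, 0 < n →
      (∑ i ∈ Finset.range n, k (((i : ℝ) + 1) * (M / n)) * (M / n)) ≤ J := by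
    intro n hn
    have hnR : (0:ℝ) < n := by exact_mod_cast hn
    set δ := M / n with hδdef
    have hδ : 0 ≤ δ := div_nonneg hM hnR.le
    have key : ∀ j : ℕ, j ≤ n → ∃ a, s ≤ a ∧ a ≤ τ ∧ Y a - Y s = j * δ ∧
        (∑ i ∈ Finset.range j, k (((i : ℝ) + 1) * δ) * δ) ≤ ∫ t in s..a, k (Y t - Y s) * y' t := by
      intro j
      induction j with
      | zero =>
        intro _
        exact ⟨s, le_rfl, hsτ, by simp, by simp⟩
      | succ j ih =>
        intro hj
        obtain ⟨a, hsa, haτ, hYa, hsum⟩ := ih (Nat.le_of_succ_le hj)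
        have hjn : ((j : ℝ) + 1) ≤ n := by exact_mod_cast hj
        have hv1 : Y a ≤ Y s + ((j : ℝ) + 1) * δ := by nlinarith
        have hv2 : Y s + ((j : ℝ) + 1) * δ ≤ Y τ := by
          have h1 : ((j : ℝ) + 1) * δ ≤ n * δ := by nlinarith
          have h2 : (n : ℝ) * δ = M := by rw [hδdef]; field_simp
          nlinarith
        obtain ⟨b, hb, hYb⟩ :=
          intermediate_value_Icc haτ hYc.continuousOn ⟨hv1, hv2⟩
        have hab : a ≤ b := hb.1
        have hbτ : b ≤ τ := hb.2
        have hYba : Y b - Y a = δ := by rw [hYb]; linarith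
        have hstep : k (((j : ℝ) + 1) * δ) * δ ≤ ∫ t in a..b, k (Y t - Y s) * y' t := by
          have hmono : ∫ t in a..b, k (((j : ℝ) + 1) * δ) * y' t
              ≤ ∫ t in a..b, k (Y t - Y s) * y' t := by
            apply intervalIntegral.integral_mono_on hab ((hy'_int a b).const_mul _) (h_int a b)
            intro t ht
            have hYt : Y t - Y s ≤ ((j : ℝ) + 1) * δ := by
              have := hYmono ht.2
              rw [hYb] at this
              linarith
            exact mul_le_mul_of_nonneg_right (hk_anti hYt) (hy'_nonneg t)
          calc k (((j : ℝ) + 1) * δ) * δ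
              = k (((j : ℝ) + 1) * δ) * ∫ t in a..b, y' t := by
                rw [← hY a b, hYba]
            _ = ∫ t in a..b, k (((j : ℝ) + 1) * δ) * y' t := by
                rw [intervalIntegral.integral_const_mul]
            _ ≤ _ := hmono
        refine ⟨b, hsa.trans hab, hbτ, by rw [hYb]; push_cast; ring, ?_⟩
        rw [← intervalIntegral.integral_add_adjacent_intervals (h_int s a) (h_int a b),
          Finset.sum_range_succ]
        push_cast
        exact add_le_add hsum hstep
    obtain ⟨a, hsa, haτ, _, hsum⟩ := key n le_rfl
    have htail : 0 ≤ ∫ t in a..τ, k (Y t - Y s) * y' t :=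
      intervalIntegral.integral_nonneg haτ
        (fun t _ => mul_nonneg (hk_nonneg _) (hy'_nonneg t))
    have := intervalIntegral.integral_add_adjacent_intervals (h_int s a) (h_int a τ)
    rw [hJ]
    rw [← this]
    exact le_add_of_le_of_nonneg hsum htail
  have hup : ∀ n : ℕ, 0 < n →
      (∫ u in (0:ℝ)..M, k u) ≤ (∑ i ∈ Finset.range n, k (((i : ℝ) + 1) * (M / n)) * (M / n)) + M / n := by
    intro n hn
    have hnR : (0:ℝ) < n := by exact_mod_cast hn
    set δ := M / n with hδdef
    have hδ : 0 ≤ δ := div_nonneg hM hnR.le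
    have hki : ∀ a b : ℝ, IntervalIntegrable k volume a b := fun a b =>
      hk_cont.intervalIntegrable a b
    have hadj : ∑ i ∈ Finset.range n, ∫ u in ((i : ℝ) * δ)..(((i : ℝ) + 1) * δ), k u
        = ∫ u in (0:ℝ)..((n : ℝ) * δ), k u := by
      have := intervalIntegral.sum_integral_adjacent_intervals
        (a := fun i : ℕ => (i : ℝ) * δ) (n := n) (f := k) (μ := volume)
        (fun i _ => hki _ _)
      simpa using this
    have hnδ : (n : ℝ) * δ = M := by rw [hδdef]; field_simp
    have hpiece : ∀ i : ℕ, (∫ u in ((i : ℝ) * δ)..(((i : ℝ) + 1) * δ), k u)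
        ≤ k ((i : ℝ) * δ) * δ := by
      intro i
      have hle : (i : ℝ) * δ ≤ ((i : ℝ) + 1) * δ := by nlinarith
      have := intervalIntegral.integral_mono_on hle (hki _ _)
        (_root_.intervalIntegrable_const (c := k ((i : ℝ) * δ)))
        (fun u hu => hk_anti hu.1)
      calc (∫ u in ((i : ℝ) * δ)..(((i : ℝ) + 1) * δ), k u)
          ≤ ∫ _u in ((i : ℝ) * δ)..(((i : ℝ) + 1) * δ), k ((i : ℝ) * δ) := this
        _ = k ((i : ℝ) * δ) * δ := by
            rw [intervalIntegral.integral_const, smul_eq_mul]; ring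
    have hsum1 : (∫ u in (0:ℝ)..M, k u) ≤ ∑ i ∈ Finset.range n, k ((i : ℝ) * δ) * δ := by
      rw [← hnδ, ← hadj]
      exact Finset.sum_le_sum (fun i _ => hpiece i)
    have htel : ∑ i ∈ Finset.range n, k ((i : ℝ) * δ) * δ
        ≤ (∑ i ∈ Finset.range n, k (((i : ℝ) + 1) * δ) * δ) + δ := by
      have h1 : ∑ i ∈ Finset.range n, (k ((i : ℝ) * δ) * δ - k (((i : ℝ) + 1) * δ) * δ)
          = (k 0 - k ((n : ℝ) * δ)) * δ := by
        have := Finset.sum_range_sub' (f := fun i : ℕ => k ((i : ℝ) * δ) * δ) (n := n)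
        push_cast at this ⊢
        rw [this]
        simp [sub_mul]
      have h2 : (k 0 - k ((n : ℝ) * δ)) * δ ≤ δ := by
        have := hk_nonneg ((n : ℝ) * δ)
        nlinarith
      have h3 := Finset.sum_sub_distrib (f := fun i : ℕ => k ((i : ℝ) * δ) * δ)
        (g := fun i : ℕ => k (((i : ℝ) + 1) * δ) * δ) (s := Finset.range n)
      linarith [h1 ▸ h3.symm.le]
    calc (∫ u in (0:ℝ)..M, k u) ≤ ∑ i ∈ Finset.range n, k ((i : ℝ) * δ) * δ := hsum1
      _ ≤ (∑ i ∈ Finset.range n, k (((i : ℝ) + 1) * δ) * δ) + δ := htel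
  by_contra hcon
  push_neg at hcon
  set KM := ∫ u in (0:ℝ)..M, k u
  have hd : 0 < KM - J := by linarith
  obtain ⟨n, hn⟩ := exists_nat_gt (M / (KM - J))
  have hn0 : 0 < n := by
    by_contra h
    push_neg at h
    interval_cases n
    simp at hn
    nlinarith [div_nonneg hM hd.le]
  have hnR : (0:ℝ) < n := by exact_mod_cast hn0
  have hMn : M / n < KM - J := by
    rw [div_lt_iff₀ hnR]
    calc M = (M / (KM - J)) * (KM - J) := by field_simp
      _ < n * (KM - J) := by exact mul_lt_mul_of_pos_right hn hd
      _ = (KM - J) * n := by ring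
  have := (hup n hn0).trans (add_le_add_left (hJ_ge n hn0) _)
  linarith

end AuxForStatement14

set_option maxHeartbeats 3200000 in
/-- If `ℙ(γ* = 0) = 0`, `∫₀^∞ y = ∞` and
`∫₀ᵗ 𝔼[exp(−γ* ∫ₛᵗ y)] x y ds ≤ 1` for all `t`, then
`limsup_{t→∞} (∫₀ᵗ x y)/(∫₀ᵗ y) ≤ 1/𝔼[1/γ*]` (interpreted as `0` when `𝔼[1/γ*] = ∞`). -/
theorem limsup_ratio_le_inv_harmonic_mean
    {Ω : Type*} [MeasurableSpace Ω] (P : Measure Ω) [IsProbabilityMeasure P]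
    (gs : Ω → ℝ) (hgs : Measurable gs)
    (hrange : ∀ᵐ ω ∂P, gs ω ∈ Set.Icc (0:ℝ) 1)
    (hzero : P {ω | gs ω = 0} = 0)
    (x y : ℝ → ℝ) (hx : Measurable x) (hy : Measurable y)
    (hxnn : ∀ t : ℝ, 0 ≤ t → 0 ≤ x t) (hynn : ∀ t : ℝ, 0 ≤ t → 0 ≤ y t)
    (hxloc : ∀ t : ℝ, IntegrableOn x (Set.Icc 0 t))
    (hyloc : ∀ t : ℝ, IntegrableOn y (Set.Icc 0 t))
    (hydiv : (∫⁻ t in Set.Ioi (0:ℝ), ENNReal.ofReal (y t)) = ⊤)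
    (hbound : ∀ t : ℝ, 0 ≤ t →
      (∫ s in (0:ℝ)..t,
        (∫ ω, Real.exp (- (gs ω * ∫ r in s..t, y r)) ∂P) * (x s * y s)) ≤ 1) :
    Filter.limsup
        (fun t : ℝ => (∫ s in (0:ℝ)..t, x s * y s) / ∫ s in (0:ℝ)..t, y s) atTop
      ≤ ((∫⁻ ω, (ENNReal.ofReal (gs ω))⁻¹ ∂P)⁻¹).toReal := by
  classical
  set m : ℝ≥0∞ := ∫⁻ ω, (ENNReal.ofReal (gs ω))⁻¹ ∂P with hm
  set R : ℝ := (m⁻¹).toReal with hRdef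
  have hR0 : 0 ≤ R := ENNReal.toReal_nonneg
  have hgs_ae : ∀ᵐ ω ∂P, gs ω ∈ Set.Ioc (0:ℝ) 1 := by
    have h2 : ∀ᵐ ω ∂P, ¬ (gs ω = 0) := by
      rw [ae_iff]; simpa using hzero
    filter_upwards [hrange, h2] with ω h1 h2
    exact ⟨lt_of_le_of_ne h1.1 (Ne.symm h2), h1.2⟩
  have hnum_nonneg : ∀ t : ℝ, 0 ≤ t → 0 ≤ ∫ s in (0:ℝ)..t, x s * y s := fun t ht =>
    intervalIntegral.integral_nonneg ht (fun s hs => mul_nonneg (hxnn s hs.1) (hynn s hs.1))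
  have hden_nonneg : ∀ t : ℝ, 0 ≤ t → 0 ≤ ∫ s in (0:ℝ)..t, y s := fun t ht =>
    intervalIntegral.integral_nonneg ht (fun s hs => hynn s hs.1)
  have hcob : Filter.IsCoboundedUnder (· ≤ ·) atTop
      (fun t : ℝ => (∫ s in (0:ℝ)..t, x s * y s) / ∫ s in (0:ℝ)..t, y s) := by
    apply Filter.isCoboundedUnder_le_of_eventually_le atTop (x := 0)
    filter_upwards [eventually_ge_atTop (0:ℝ)] with t ht
    exact div_nonneg (hnum_nonneg t ht) (hden_nonneg t ht)
  by_cases hQ : ∀ t : ℝ, IntegrableOn (fun s => x s * y s) (Set.Ioc 0 t)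
  swap
  · -- junk case : the numerator is eventually the junk value 0
    push_neg at hQ
    obtain ⟨t₀, ht₀⟩ := hQ
    have hev : ∀ᶠ t in atTop,
        (∫ s in (0:ℝ)..t, x s * y s) / (∫ s in (0:ℝ)..t, y s) = 0 := by
      filter_upwards [eventually_ge_atTop t₀] with t ht
      have hni : ¬ IntervalIntegrable (fun s => x s * y s) volume 0 t := by
        intro hI
        have ht0 : (0:ℝ) ≤ t := by
          by_contra h
          push_neg at h
          refine ht₀ ?_
          have he : Set.Ioc (0:ℝ) t₀ = ∅ := Set.Ioc_eq_empty (by intro hc; linarith)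
          rw [he]; exact integrableOn_empty
        have h2 := (intervalIntegrable_iff_integrableOn_Ioc_of_le ht0).mp hI
        exact ht₀ (h2.mono_set (Set.Ioc_subset_Ioc le_rfl ht))
      rw [intervalIntegral.integral_undef hni, zero_div]
    rw [Filter.limsup_congr hev, Filter.limsup_const]
    exact hR0
  -- MAIN CASE
  set y' : ℝ → ℝ := fun t => if 0 ≤ t then y t else 0 with hy'def
  set q' : ℝ → ℝ := fun s => if 0 < s then x s * y s else 0 with hq'def
  have hy'_meas : Measurable y' := Measurable.ite measurableSet_Ici hy measurable_const
  have hq'_meas : Measurable q' := Measurable.ite measurableSet_Ioi (hx.mul hy) measurable_const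
  have hy'_nonneg : ∀ t, 0 ≤ y' t := by
    intro t; rw [hy'def]; dsimp only
    split_ifs with h
    · exact hynn t h
    · exact le_rfl
  have hq'_nonneg : ∀ s, 0 ≤ q' s := by
    intro s; rw [hq'def]; dsimp only
    split_ifs with h
    · exact mul_nonneg (hxnn s h.le) (hynn s h.le)
    · exact le_rfl
  have hy'_Icc : ∀ c d : ℝ, IntegrableOn y' (Set.Icc c d) := by
    intro c d
    have hind : y' = (Set.Ici (0:ℝ)).indicator y := by
      funext t; rw [hy'def]; simp [Set.indicator_apply, Set.mem_Ici]
    rw [hind, IntegrableOn, integrable_indicator_iff measurableSet_Ici, IntegrableOn,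
      Measure.restrict_restrict measurableSet_Ici]
    exact (hyloc d).mono_set (fun u hu => ⟨hu.1, hu.2.2⟩)
  have hq'_Icc : ∀ c d : ℝ, IntegrableOn q' (Set.Icc c d) := by
    intro c d
    have hind : q' = (Set.Ioi (0:ℝ)).indicator (fun s => x s * y s) := by
      funext t; rw [hq'def]; simp [Set.indicator_apply, Set.mem_Ioi]
    rw [hind, IntegrableOn, integrable_indicator_iff measurableSet_Ioi, IntegrableOn,
      Measure.restrict_restrict measurableSet_Ioi]
    exact (hQ d).mono_set (fun u hu => ⟨hu.1, hu.2.2⟩)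
  have hy'_int : ∀ a b : ℝ, IntervalIntegrable y' volume a b := fun a b =>
    (hy'_Icc (min a b) (max a b)).intervalIntegrable
  have hq'_int : ∀ a b : ℝ, IntervalIntegrable q' volume a b := fun a b =>
    (hq'_Icc (min a b) (max a b)).intervalIntegrable
  set Y : ℝ → ℝ := fun t => ∫ s in (0:ℝ)..t, y' s with hYdef
  set X : ℝ → ℝ := fun t => ∫ s in (0:ℝ)..t, q' s with hXdef
  have hYc : Continuous Y := intervalIntegral.continuous_primitive hy'_int 0
  have hYdiff : ∀ a b : ℝ, Y b - Y a = ∫ t in a..b, y' t := fun a b =>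
    intervalIntegral.integral_interval_sub_left (hy'_int 0 b) (hy'_int 0 a)
  have hXdiff : ∀ a b : ℝ, X b - X a = ∫ t in a..b, q' t := fun a b =>
    intervalIntegral.integral_interval_sub_left (hq'_int 0 b) (hq'_int 0 a)
  have hY0 : Y 0 = 0 := intervalIntegral.integral_same
  have hYmono : Monotone Y := by
    intro a b hab
    have h2 : 0 ≤ ∫ t in a..b, y' t :=
      intervalIntegral.integral_nonneg hab (fun t _ => hy'_nonneg t)
    have := hYdiff a b
    linarith
  have hXnn : ∀ t, 0 ≤ t → 0 ≤ X t := fun t ht =>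
    intervalIntegral.integral_nonneg ht (fun s _ => hq'_nonneg s)
  have hDen : ∀ t : ℝ, 0 ≤ t → (∫ s in (0:ℝ)..t, y s) = Y t := by
    intro t ht
    rw [hYdef]
    apply intervalIntegral.integral_congr
    intro s hs
    rw [Set.uIcc_of_le ht] at hs
    rw [hy'def]
    simp [hs.1]
  have hNum : ∀ t : ℝ, 0 ≤ t → (∫ s in (0:ℝ)..t, x s * y s) = X t := by
    intro t ht
    rw [hXdef]
    dsimp only
    rw [intervalIntegral.integral_of_le ht, intervalIntegral.integral_of_le ht]
    apply setIntegral_congr_fun measurableSet_Ioc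
    intro s hs
    rw [hq'def]
    simp [hs.1]
  -- Y tends to infinity
  have hYtop : Tendsto Y atTop atTop := by
    have hsup : ∀ C : ℝ, ∃ n : ℕ, C ≤ Y n := by
      intro C
      rcases le_or_gt C 0 with hC | hC
      · refine ⟨0, ?_⟩
        have hc0 : ((0:ℕ):ℝ) = 0 := by norm_num
        rw [hc0, hY0]
        exact hC
      set ν := volume.withDensity (fun t => ENNReal.ofReal (y t)) with hν
      have hν_apply : ∀ s : Set ℝ, MeasurableSet s →
          ν s = ∫⁻ t in s, ENNReal.ofReal (y t) := fun s hs =>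
        withDensity_apply _ hs
      have hunion : Set.Ioi (0:ℝ) = ⋃ n : ℕ, Set.Ioc (0:ℝ) (n:ℝ) := by
        ext u
        simp only [Set.mem_Ioi, Set.mem_iUnion, Set.mem_Ioc]
        constructor
        · intro hu
          obtain ⟨n, hn⟩ := exists_nat_ge u
          exact ⟨n, hu, hn⟩
        · rintro ⟨n, hn, -⟩; exact hn
      have hdir : Directed (· ⊆ ·) (fun n : ℕ => Set.Ioc (0:ℝ) (n:ℝ)) := by
        intro i j
        refine ⟨max i j, Set.Ioc_subset_Ioc le_rfl ?_, Set.Ioc_subset_Ioc le_rfl ?_⟩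
        · exact_mod_cast le_max_left i j
        · exact_mod_cast le_max_right i j
      have htop : (⨆ n : ℕ, ν (Set.Ioc (0:ℝ) (n:ℝ))) = ⊤ := by
        rw [← Directed.measure_iUnion hdir, ← hunion, hν_apply _ measurableSet_Ioi, hydiv]
      have hlt : (ENNReal.ofReal C) < ⨆ n : ℕ, ν (Set.Ioc (0:ℝ) (n:ℝ)) := by
        rw [htop]; exact ENNReal.ofReal_lt_top
      obtain ⟨n, hn⟩ := lt_iSup_iff.mp hlt
      refine ⟨n, ?_⟩
      have hYn : ENNReal.ofReal (Y n) = ν (Set.Ioc (0:ℝ) (n:ℝ)) := by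
        rw [hν_apply _ measurableSet_Ioc]
        have h1 : Y n = ∫ t in Set.Ioc (0:ℝ) (n:ℝ), y t := by
          rw [hYdef]
          dsimp only
          rw [intervalIntegral.integral_of_le (by positivity : (0:ℝ) ≤ (n:ℝ))]
          apply setIntegral_congr_fun measurableSet_Ioc
          intro s hs
          rw [hy'def]
          simp [hs.1.le]
        rw [h1]
        exact ofReal_integral_eq_lintegral_ofReal
          ((hyloc n).mono_set Set.Ioc_subset_Icc_self)
          ((ae_restrict_iff' measurableSet_Ioc).2 (ae_of_all _ fun s hs => hynn s hs.1.le))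
      rw [← hYn] at hn
      exact (ENNReal.ofReal_lt_ofReal_iff'.mp hn).1.le
    apply tendsto_atTop_atTop_of_monotone hYmono
    intro b
    obtain ⟨n, hn⟩ := hsup b
    exact ⟨n, hn⟩
  -- the kernel k and its properties
  have hexp_meas : ∀ u : ℝ, Measurable fun ω => Real.exp (-(gs ω * u)) := fun u =>
    Real.measurable_exp.comp ((hgs.mul_const u).neg)
  have hexp_le : ∀ u : ℝ, ∀ᵐ ω ∂P, Real.exp (-(gs ω * u)) ≤ Real.exp |u| := by
    intro u
    filter_upwards [hgs_ae] with ω hω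
    apply Real.exp_le_exp.2
    rcases le_or_gt 0 u with h | h
    · have h1 : 0 ≤ gs ω * u := mul_nonneg hω.1.le h
      calc -(gs ω * u) ≤ 0 := by linarith
        _ ≤ |u| := abs_nonneg u
    · have h2 : -(gs ω * u) = gs ω * (-u) := by ring
      rw [h2]
      calc gs ω * (-u) ≤ 1 * (-u) := mul_le_mul_of_nonneg_right hω.2 (by linarith)
        _ = -u := one_mul _
        _ ≤ |u| := neg_le_abs u
  have hexp_int : ∀ u : ℝ, Integrable (fun ω => Real.exp (-(gs ω * u))) P := by
    intro u
    apply Integrable.mono' (integrable_const (Real.exp |u|))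
      (hexp_meas u).aestronglyMeasurable
    filter_upwards [hexp_le u] with ω h
    rw [Real.norm_eq_abs, abs_of_pos (Real.exp_pos _)]
    exact h
  set k : ℝ → ℝ := fun u => ∫ ω, Real.exp (-(gs ω * u)) ∂P with hkdef
  have hk_nonneg : ∀ u, 0 ≤ k u := fun u =>
    integral_nonneg (fun ω => (Real.exp_pos _).le)
  have hk_anti : Antitone k := by
    intro u v huv
    apply integral_mono_ae (hexp_int v) (hexp_int u)
    filter_upwards [hgs_ae] with ω hω
    apply Real.exp_le_exp.2
    have := mul_le_mul_of_nonneg_left huv hω.1.le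
    linarith
  have hk0 : k 0 = 1 := by
    rw [hkdef]
    simp
  have hk_cont : Continuous k := by
    rw [continuous_iff_continuousAt]
    intro u₀
    apply continuousAt_of_dominated (bound := fun _ : Ω => Real.exp (|u₀| + 1))
    · exact Eventually.of_forall fun u => (hexp_meas u).aestronglyMeasurable
    · filter_upwards [Metric.ball_mem_nhds u₀ one_pos] with u hu
      filter_upwards [hexp_le u] with ω hω
      rw [Real.norm_eq_abs, abs_of_pos (Real.exp_pos _)]
      refine hω.trans (Real.exp_le_exp.2 ?_)
      have h1 := abs_sub_abs_le_abs_sub u u₀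
      have hd := mem_ball_iff_norm.mp hu
      rw [Real.norm_eq_abs] at hd
      linarith
    · exact integrable_const _
    · exact Eventually.of_forall fun ω =>
        (Real.continuous_exp.comp (by continuity)).continuousAt
  have hk_le_one : k 0 ≤ 1 := le_of_eq hk0
  have hk_lb : ∀ u : ℝ, 0 ≤ u → Real.exp (-u) ≤ k u := by
    intro u hu
    have h0 : Real.exp (-u) = ∫ _ω, Real.exp (-u) ∂P := by simp
    rw [h0]
    apply integral_mono_ae (integrable_const _) (hexp_int u)
    filter_upwards [hgs_ae] with ω hω
    apply Real.exp_le_exp.2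
    have := mul_le_mul_of_nonneg_right hω.2 hu
    nlinarith
  set K : ℝ → ℝ := fun M => ∫ u in (0:ℝ)..M, k u with hKdef
  have hK_pos : ∀ M : ℝ, 0 < M → 0 < K M := by
    intro M hM
    have h1 : (∫ _u in (0:ℝ)..M, Real.exp (-M)) ≤ K M := by
      apply intervalIntegral.integral_mono_on hM.le _root_.intervalIntegrable_const
        (hk_cont.intervalIntegrable _ _)
      intro u hu
      calc Real.exp (-M) ≤ Real.exp (-u) := Real.exp_le_exp.2 (by linarith [hu.2])
        _ ≤ k u := hk_lb u hu.1
    rw [intervalIntegral.integral_const, smul_eq_mul, sub_zero] at h1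
    nlinarith [Real.exp_pos (-M)]
  -- the bound hypothesis, rewritten
  have hbound' : ∀ τ : ℝ, 0 ≤ τ → (∫ s in Set.Ioc (0:ℝ) τ, k (Y τ - Y s) * q' s) ≤ 1 := by
    intro τ hτ
    have h := hbound τ hτ
    rw [intervalIntegral.integral_of_le hτ] at h
    calc (∫ s in Set.Ioc (0:ℝ) τ, k (Y τ - Y s) * q' s)
        = ∫ s in Set.Ioc (0:ℝ) τ,
            (∫ ω, Real.exp (-(gs ω * ∫ r in s..τ, y r)) ∂P) * (x s * y s) := by
          apply setIntegral_congr_fun measurableSet_Ioc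
          intro s hs
          dsimp only
          have hsτ : s ≤ τ := hs.2
          have h1 : (∫ r in s..τ, y r) = Y τ - Y s := by
            rw [hYdiff s τ]
            apply intervalIntegral.integral_congr
            intro r hr
            rw [Set.uIcc_of_le hsτ] at hr
            rw [hy'def]
            simp [(hs.1.le.trans hr.1 : (0:ℝ) ≤ r)]
          rw [h1, hkdef, hq'def]
          simp [hs.1]
      _ ≤ 1 := h
  have hky_int : ∀ s' a b : ℝ,
      IntervalIntegrable (fun t => k (Y t - Y s') * y' t) volume a b := fun s' a b =>
    (hy'_int a b).continuousOn_mul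
      ((hk_cont.comp (hYc.sub continuous_const)).continuousOn)
  have hkq_int : ∀ τ' a b : ℝ,
      IntervalIntegrable (fun s => k (Y τ' - Y s) * q' s) volume a b := fun τ' a b =>
    (hq'_int a b).continuousOn_mul
      ((hk_cont.comp (continuous_const.sub hYc)).continuousOn)
  -- tail bound
  have htail : ∀ τ M σ : ℝ, 0 ≤ τ → 0 ≤ σ → σ ≤ τ → Y τ - Y σ ≤ M →
      k M * (X τ - X σ) ≤ 1 := by
    intro τ M σ hτ hσ hστ hYM
    have h1 : (∫ s in σ..τ, k M * q' s) ≤ ∫ s in σ..τ, k (Y τ - Y s) * q' s := by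
      apply intervalIntegral.integral_mono_on hστ ((hq'_int σ τ).const_mul _) (hkq_int τ σ τ)
      intro s hs
      refine mul_le_mul_of_nonneg_right ?_ (hq'_nonneg s)
      apply hk_anti
      have := hYmono hs.1
      linarith
    have h2 : (∫ s in σ..τ, k (Y τ - Y s) * q' s) ≤ ∫ s in (0:ℝ)..τ, k (Y τ - Y s) * q' s := by
      rw [← intervalIntegral.integral_add_adjacent_intervals (hkq_int τ 0 σ) (hkq_int τ σ τ)]
      have h3 : 0 ≤ ∫ s in (0:ℝ)..σ, k (Y τ - Y s) * q' s :=
        intervalIntegral.integral_nonneg hσ (fun s _ => mul_nonneg (hk_nonneg _) (hq'_nonneg s))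
      linarith
    have h4 : (∫ s in (0:ℝ)..τ, k (Y τ - Y s) * q' s) ≤ 1 := by
      rw [intervalIntegral.integral_of_le hτ]
      exact hbound' τ hτ
    have h5 : (∫ s in σ..τ, k M * q' s) = k M * (X τ - X σ) := by
      rw [intervalIntegral.integral_const_mul, hXdiff]
    linarith
  -- the main chain inequality
  have hmainchain : ∀ τ M σ : ℝ, 0 ≤ τ → 0 < M → 0 ≤ σ → σ ≤ τ → Y σ = Y τ - M →
      K M * X σ ≤ Y τ := by
    intro τ M σ hτ hM hσ hστ hYσ
    have hXσnn : 0 ≤ X σ := hXnn σ hσ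
    have hYτnn : 0 ≤ Y τ := by rw [← hY0]; exact hYmono hτ
    have e1 : ENNReal.ofReal (X σ) = ∫⁻ s in Set.Ioc (0:ℝ) σ, ENNReal.ofReal (q' s) := by
      rw [show X σ = ∫ s in Set.Ioc (0:ℝ) σ, q' s by
        rw [hXdef]; exact intervalIntegral.integral_of_le hσ]
      exact ofReal_integral_eq_lintegral_ofReal
        ((intervalIntegrable_iff_integrableOn_Ioc_of_le hσ).mp (hq'_int 0 σ))
        ((ae_restrict_iff' measurableSet_Ioc).2 (ae_of_all _ fun s _ => hq'_nonneg s))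
    have e2 : ∀ s : ℝ, 0 < s → s ≤ σ → ENNReal.ofReal (K M)
        ≤ ∫⁻ t in Set.Ioc s τ, ENNReal.ofReal (k (Y t - Y s) * y' t) := by
      intro s hs hsσ
      have hsτ : s ≤ τ := hsσ.trans hστ
      have hMle : M ≤ Y τ - Y s := by
        have := hYmono hsσ
        linarith
      have hr := aux_riemann_lower hk_cont hk_anti hk_nonneg hk_le_one hy'_nonneg hy'_int
        hYdiff hYc hsτ hM.le hMle
      calc ENNReal.ofReal (K M)
          ≤ ENNReal.ofReal (∫ t in s..τ, k (Y t - Y s) * y' t) := ENNReal.ofReal_le_ofReal hr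
        _ = ∫⁻ t in Set.Ioc s τ, ENNReal.ofReal (k (Y t - Y s) * y' t) := by
            rw [intervalIntegral.integral_of_le hsτ]
            exact ofReal_integral_eq_lintegral_ofReal
              ((intervalIntegrable_iff_integrableOn_Ioc_of_le hsτ).mp (hky_int s s τ))
              ((ae_restrict_iff' measurableSet_Ioc).2 (ae_of_all _ fun t _ =>
                mul_nonneg (hk_nonneg _) (hy'_nonneg t)))
    have e3 : ∀ t : ℝ, 0 < t → t ≤ τ →
        (∫⁻ s in Set.Ioc (0:ℝ) t, ENNReal.ofReal (k (Y t - Y s) * q' s)) ≤ 1 := by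
      intro t ht htτ
      have heq : (∫⁻ s in Set.Ioc (0:ℝ) t, ENNReal.ofReal (k (Y t - Y s) * q' s))
          = ENNReal.ofReal (∫ s in Set.Ioc (0:ℝ) t, k (Y t - Y s) * q' s) :=
        (ofReal_integral_eq_lintegral_ofReal
          ((intervalIntegrable_iff_integrableOn_Ioc_of_le ht.le).mp (hkq_int t 0 t))
          ((ae_restrict_iff' measurableSet_Ioc).2 (ae_of_all _ fun s _ =>
            mul_nonneg (hk_nonneg _) (hq'_nonneg s)))).symm
      rw [heq]
      calc ENNReal.ofReal (∫ s in Set.Ioc (0:ℝ) t, k (Y t - Y s) * q' s)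
          ≤ ENNReal.ofReal 1 := ENNReal.ofReal_le_ofReal (hbound' t ht.le)
        _ = 1 := ENNReal.ofReal_one
    set W : ℝ → ℝ → ℝ≥0∞ := fun s t =>
      ENNReal.ofReal (k (Y t - Y s)) * ENNReal.ofReal (y' t) * ENNReal.ofReal (q' s)
      with hWdef
    have hW_meas : Measurable (fun p : ℝ × ℝ => W p.1 p.2) := by
      simp only [hWdef]
      apply Measurable.fun_mul
      · apply Measurable.fun_mul
        · exact ENNReal.measurable_ofReal.comp
            ((hk_cont.comp ((hYc.comp continuous_snd).sub (hYc.comp continuous_fst))).measurable)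
        · exact ENNReal.measurable_ofReal.comp (hy'_meas.comp measurable_snd)
      · exact ENNReal.measurable_ofReal.comp (hq'_meas.comp measurable_fst)
    set T1 : Set (ℝ × ℝ) := {p | p.1 ∈ Set.Ioc (0:ℝ) σ ∧ p.2 ∈ Set.Ioc p.1 τ} with hT1
    set T2 : Set (ℝ × ℝ) := {p | p.2 ∈ Set.Ioc (0:ℝ) τ ∧ p.1 ∈ Set.Ioc (0:ℝ) p.2} with hT2
    have hT1m : MeasurableSet T1 := by
      have h : T1 = ({p : ℝ × ℝ | 0 < p.1} ∩ {p : ℝ × ℝ | p.1 ≤ σ})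
          ∩ ({p : ℝ × ℝ | p.1 < p.2} ∩ {p : ℝ × ℝ | p.2 ≤ τ}) := by
        ext p; simp only [hT1, Set.mem_setOf_eq, Set.mem_Ioc, Set.mem_inter_iff]; try tauto
      rw [h]
      exact ((measurableSet_lt measurable_const measurable_fst).inter
        (measurableSet_le measurable_fst measurable_const)).inter
        ((measurableSet_lt measurable_fst measurable_snd).inter
        (measurableSet_le measurable_snd measurable_const))
    have hT2m : MeasurableSet T2 := by
      have h : T2 = ({p : ℝ × ℝ | 0 < p.2} ∩ {p : ℝ × ℝ | p.2 ≤ τ})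
          ∩ ({p : ℝ × ℝ | 0 < p.1} ∩ {p : ℝ × ℝ | p.1 ≤ p.2}) := by
        ext p; simp only [hT2, Set.mem_setOf_eq, Set.mem_Ioc, Set.mem_inter_iff]; try tauto
      rw [h]
      exact ((measurableSet_lt measurable_const measurable_snd).inter
        (measurableSet_le measurable_snd measurable_const)).inter
        ((measurableSet_lt measurable_const measurable_fst).inter
        (measurableSet_le measurable_fst measurable_snd))
    have h1 : (∫⁻ s in Set.Ioc (0:ℝ) σ, ∫⁻ t in Set.Ioc s τ, W s t)
        = ∫⁻ s, ∫⁻ t, T1.indicator (fun p : ℝ × ℝ => W p.1 p.2) (s, t) := by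
      rw [← lintegral_indicator measurableSet_Ioc]
      apply lintegral_congr
      intro s
      by_cases hs : s ∈ Set.Ioc (0:ℝ) σ
      · rw [Set.indicator_of_mem hs, ← lintegral_indicator measurableSet_Ioc]
        apply lintegral_congr
        intro t
        by_cases ht : t ∈ Set.Ioc s τ
        · rw [Set.indicator_of_mem ht, Set.indicator_of_mem (show (s, t) ∈ T1 from ⟨hs, ht⟩)]
        · rw [Set.indicator_of_notMem ht, Set.indicator_of_notMem
            (show (s, t) ∉ T1 from fun hc => ht hc.2)]
      · rw [Set.indicator_of_notMem hs]
        symm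
        have hz : ∀ t : ℝ, T1.indicator (fun p : ℝ × ℝ => W p.1 p.2) (s, t) = 0 := fun t =>
          Set.indicator_of_notMem (fun hc => hs hc.1) _
        simp only [hz, lintegral_const, zero_mul]
    have h2 : (∫⁻ t in Set.Ioc (0:ℝ) τ, ∫⁻ s in Set.Ioc (0:ℝ) t, W s t)
        = ∫⁻ t, ∫⁻ s, T2.indicator (fun p : ℝ × ℝ => W p.1 p.2) (s, t) := by
      rw [← lintegral_indicator measurableSet_Ioc]
      apply lintegral_congr
      intro t
      by_cases ht : t ∈ Set.Ioc (0:ℝ) τ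
      · rw [Set.indicator_of_mem ht, ← lintegral_indicator measurableSet_Ioc]
        apply lintegral_congr
        intro s
        by_cases hs : s ∈ Set.Ioc (0:ℝ) t
        · rw [Set.indicator_of_mem hs, Set.indicator_of_mem (show (s, t) ∈ T2 from ⟨ht, hs⟩)]
        · rw [Set.indicator_of_notMem hs, Set.indicator_of_notMem
            (show (s, t) ∉ T2 from fun hc => hs hc.2)]
      · rw [Set.indicator_of_notMem ht]
        symm
        have hz : ∀ s : ℝ, T2.indicator (fun p : ℝ × ℝ => W p.1 p.2) (s, t) = 0 := fun s =>
          Set.indicator_of_notMem (fun hc => ht hc.1) _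
        simp only [hz, lintegral_const, zero_mul]
    have hmono12 : ∀ p : ℝ × ℝ, T1.indicator (fun p : ℝ × ℝ => W p.1 p.2) p
        ≤ T2.indicator (fun p : ℝ × ℝ => W p.1 p.2) p := by
      intro p
      by_cases hp : p ∈ T1
      · have hp2 : p ∈ T2 := by
          obtain ⟨⟨ha, hb⟩, hc, hd⟩ := hp
          exact ⟨⟨lt_trans ha hc, hd⟩, ⟨ha, hc.le⟩⟩
        rw [Set.indicator_of_mem hp, Set.indicator_of_mem hp2]
      · rw [Set.indicator_of_notMem hp]
        exact zero_le
    have hswap : (∫⁻ s, ∫⁻ t, T2.indicator (fun p : ℝ × ℝ => W p.1 p.2) (s, t))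
        = ∫⁻ t, ∫⁻ s, T2.indicator (fun p : ℝ × ℝ => W p.1 p.2) (s, t) :=
      lintegral_lintegral_swap ((hW_meas.indicator hT2m).aemeasurable)
    have key : (∫⁻ s in Set.Ioc (0:ℝ) σ, ∫⁻ t in Set.Ioc s τ, W s t)
        ≤ ∫⁻ t in Set.Ioc (0:ℝ) τ, ∫⁻ s in Set.Ioc (0:ℝ) t, W s t := by
      rw [h1, h2, ← hswap]
      exact lintegral_mono fun s => lintegral_mono fun t => hmono12 (s, t)
    have chain : ENNReal.ofReal (K M) * ENNReal.ofReal (X σ) ≤ ENNReal.ofReal (Y τ) := by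
      have step1 : ENNReal.ofReal (K M) * ENNReal.ofReal (X σ)
          = ∫⁻ s in Set.Ioc (0:ℝ) σ, ENNReal.ofReal (K M) * ENNReal.ofReal (q' s) := by
        rw [e1, lintegral_const_mul' _ _ ENNReal.ofReal_ne_top]
      have step2 : (∫⁻ s in Set.Ioc (0:ℝ) σ, ENNReal.ofReal (K M) * ENNReal.ofReal (q' s))
          ≤ ∫⁻ s in Set.Ioc (0:ℝ) σ, ∫⁻ t in Set.Ioc s τ, W s t := by
        apply lintegral_mono_ae
        rw [ae_restrict_iff' measurableSet_Ioc]
        apply ae_of_all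
        intro s hs
        have hWs : (∫⁻ t in Set.Ioc s τ, W s t)
            = (∫⁻ t in Set.Ioc s τ, ENNReal.ofReal (k (Y t - Y s) * y' t))
              * ENNReal.ofReal (q' s) := by
          rw [← lintegral_mul_const' _ _ ENNReal.ofReal_ne_top]
          apply lintegral_congr
          intro t
          rw [ENNReal.ofReal_mul (hk_nonneg _)]
        rw [hWs]
        exact mul_le_mul_left (e2 s hs.1 hs.2) _
      have step4 : (∫⁻ t in Set.Ioc (0:ℝ) τ, ∫⁻ s in Set.Ioc (0:ℝ) t, W s t)
          ≤ ∫⁻ t in Set.Ioc (0:ℝ) τ, ENNReal.ofReal (y' t) := by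
        apply lintegral_mono_ae
        rw [ae_restrict_iff' measurableSet_Ioc]
        apply ae_of_all
        intro t ht
        have hWt : (∫⁻ s in Set.Ioc (0:ℝ) t, W s t)
            = (∫⁻ s in Set.Ioc (0:ℝ) t, ENNReal.ofReal (k (Y t - Y s) * q' s))
              * ENNReal.ofReal (y' t) := by
          rw [← lintegral_mul_const' _ _ ENNReal.ofReal_ne_top]
          apply lintegral_congr
          intro s
          rw [ENNReal.ofReal_mul (hk_nonneg _), hWdef]
          dsimp only
          ring
        rw [hWt]
        calc (∫⁻ s in Set.Ioc (0:ℝ) t, ENNReal.ofReal (k (Y t - Y s) * q' s))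
              * ENNReal.ofReal (y' t)
            ≤ 1 * ENNReal.ofReal (y' t) := mul_le_mul_left (e3 t ht.1 ht.2) _
          _ = ENNReal.ofReal (y' t) := one_mul _
      have step5 : (∫⁻ t in Set.Ioc (0:ℝ) τ, ENNReal.ofReal (y' t)) = ENNReal.ofReal (Y τ) := by
        rw [show Y τ = ∫ t in Set.Ioc (0:ℝ) τ, y' t by
          rw [hYdef]; exact intervalIntegral.integral_of_le hτ]
        exact (ofReal_integral_eq_lintegral_ofReal
          ((intervalIntegrable_iff_integrableOn_Ioc_of_le hτ).mp (hy'_int 0 τ))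
          ((ae_restrict_iff' measurableSet_Ioc).2 (ae_of_all _ fun t _ => hy'_nonneg t))).symm
      calc ENNReal.ofReal (K M) * ENNReal.ofReal (X σ)
          = ∫⁻ s in Set.Ioc (0:ℝ) σ, ENNReal.ofReal (K M) * ENNReal.ofReal (q' s) := step1
        _ ≤ ∫⁻ s in Set.Ioc (0:ℝ) σ, ∫⁻ t in Set.Ioc s τ, W s t := step2
        _ ≤ ∫⁻ t in Set.Ioc (0:ℝ) τ, ∫⁻ s in Set.Ioc (0:ℝ) t, W s t := key
        _ ≤ ∫⁻ t in Set.Ioc (0:ℝ) τ, ENNReal.ofReal (y' t) := step4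
        _ = ENNReal.ofReal (Y τ) := step5
    have hfin : ENNReal.ofReal (K M * X σ) ≤ ENNReal.ofReal (Y τ) := by
      rw [ENNReal.ofReal_mul (hK_pos M hM).le]
      exact chain
    exact (ENNReal.ofReal_le_ofReal_iff hYτnn).mp hfin
  -- identification of the supremum of K with m
  have hKofReal : ∀ n : ℕ, ENNReal.ofReal (K n)
      = ∫⁻ ω, ENNReal.ofReal ((1 - Real.exp (-(gs ω * n))) / gs ω) ∂P := by
    intro n
    have hn0 : (0:ℝ) ≤ (n:ℝ) := n.cast_nonneg
    have h1 : ENNReal.ofReal (K n) = ∫⁻ u in Set.Ioc (0:ℝ) (n:ℝ), ENNReal.ofReal (k u) := by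
      rw [hKdef]
      dsimp only
      rw [intervalIntegral.integral_of_le hn0]
      exact ofReal_integral_eq_lintegral_ofReal
        ((intervalIntegrable_iff_integrableOn_Ioc_of_le hn0).mp (hk_cont.intervalIntegrable _ _))
        ((ae_restrict_iff' measurableSet_Ioc).2 (ae_of_all _ fun u _ => hk_nonneg u))
    rw [h1]
    calc (∫⁻ u in Set.Ioc (0:ℝ) (n:ℝ), ENNReal.ofReal (k u))
        = ∫⁻ u in Set.Ioc (0:ℝ) (n:ℝ), ∫⁻ ω, ENNReal.ofReal (Real.exp (-(gs ω * u))) ∂P := by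
          apply lintegral_congr
          intro u
          rw [hkdef]
          exact ofReal_integral_eq_lintegral_ofReal (hexp_int u)
            (ae_of_all _ fun ω => (Real.exp_pos _).le)
      _ = ∫⁻ ω, (∫⁻ u in Set.Ioc (0:ℝ) (n:ℝ), ENNReal.ofReal (Real.exp (-(gs ω * u)))) ∂P := by
          apply lintegral_lintegral_swap
          exact (ENNReal.measurable_ofReal.comp (Real.measurable_exp.comp
            (((hgs.comp measurable_snd).mul measurable_fst).neg))).aemeasurable
      _ = _ := by
          apply lintegral_congr_ae
          filter_upwards [hgs_ae] with ω hω
          have hg : 0 < gs ω := hω.1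
          have hint : IntegrableOn (fun u => Real.exp (-(gs ω * u))) (Set.Ioc (0:ℝ) (n:ℝ)) :=
            Continuous.integrableOn_Ioc (Real.continuous_exp.comp (by continuity))
          rw [← ofReal_integral_eq_lintegral_ofReal hint
            (ae_of_all _ fun u => (Real.exp_pos _).le)]
          congr 1
          rw [← intervalIntegral.integral_of_le hn0]
          exact aux_integral_exp_neg hg (n:ℝ)
  have hsupK : (⨆ n : ℕ, ENNReal.ofReal (K n)) = m := by
    have hmeas : ∀ n : ℕ, AEMeasurable
        (fun ω => ENNReal.ofReal ((1 - Real.exp (-(gs ω * n))) / gs ω)) P := fun n =>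
      (ENNReal.measurable_ofReal.comp
        ((measurable_const.sub (Real.measurable_exp.comp ((hgs.mul_const _).neg))).div
          hgs)).aemeasurable
    have hmono : ∀ᵐ ω ∂P, Monotone
        fun n : ℕ => ENNReal.ofReal ((1 - Real.exp (-(gs ω * n))) / gs ω) := by
      filter_upwards [hgs_ae] with ω hω
      intro a b hab
      apply ENNReal.ofReal_le_ofReal
      have habR : (a:ℝ) ≤ b := by exact_mod_cast hab
      have h1 : Real.exp (-(gs ω * b)) ≤ Real.exp (-(gs ω * a)) := by
        apply Real.exp_le_exp.2
        have := mul_le_mul_of_nonneg_left habR hω.1.le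
        linarith
      have h2 : (1 - Real.exp (-(gs ω * a))) ≤ 1 - Real.exp (-(gs ω * b)) := by linarith
      rw [div_eq_mul_inv, div_eq_mul_inv]
      exact mul_le_mul_of_nonneg_right h2 (inv_nonneg.2 hω.1.le)
    have hlim : ∀ᵐ ω ∂P,
        (⨆ n : ℕ, ENNReal.ofReal ((1 - Real.exp (-(gs ω * n))) / gs ω))
          = (ENNReal.ofReal (gs ω))⁻¹ := by
      filter_upwards [hgs_ae] with ω hω
      have hg : 0 < gs ω := hω.1
      have h1 : Tendsto (fun n : ℕ => Real.exp (-(gs ω * n))) atTop (nhds 0) := by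
        apply Real.tendsto_exp_atBot.comp
        rw [tendsto_neg_atBot_iff]
        exact Tendsto.const_mul_atTop hg tendsto_natCast_atTop_atTop
      have h2 : Tendsto (fun n : ℕ => (1 - Real.exp (-(gs ω * n))) / gs ω) atTop
          (nhds ((1 - 0) / gs ω)) := (tendsto_const_nhds.sub h1).div_const (gs ω)
      have htend : Tendsto (fun n : ℕ => ENNReal.ofReal ((1 - Real.exp (-(gs ω * n))) / gs ω))
          atTop (nhds (ENNReal.ofReal ((1 - 0) / gs ω))) := ENNReal.tendsto_ofReal h2
      have hmono' : Monotone fun n : ℕ => ENNReal.ofReal ((1 - Real.exp (-(gs ω * n))) / gs ω) := by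
        intro a b hab
        apply ENNReal.ofReal_le_ofReal
        have habR : (a:ℝ) ≤ b := by exact_mod_cast hab
        have hh1 : Real.exp (-(gs ω * b)) ≤ Real.exp (-(gs ω * a)) := by
          apply Real.exp_le_exp.2
          have := mul_le_mul_of_nonneg_left habR hg.le
          linarith
        have hh2 : (1 - Real.exp (-(gs ω * a))) ≤ 1 - Real.exp (-(gs ω * b)) := by linarith
        rw [div_eq_mul_inv, div_eq_mul_inv]
        exact mul_le_mul_of_nonneg_right hh2 (inv_nonneg.2 hg.le)
      have := tendsto_nhds_unique (tendsto_atTop_iSup hmono') htend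
      rw [this]
      rw [show ((1:ℝ) - 0) / gs ω = (gs ω)⁻¹ by simp]
      exact ENNReal.ofReal_inv_of_pos hg
    calc (⨆ n : ℕ, ENNReal.ofReal (K n))
        = ⨆ n : ℕ, ∫⁻ ω, ENNReal.ofReal ((1 - Real.exp (-(gs ω * n))) / gs ω) ∂P := by
          congr 1
          funext n
          exact hKofReal n
      _ = ∫⁻ ω, ⨆ n : ℕ, ENNReal.ofReal ((1 - Real.exp (-(gs ω * n))) / gs ω) ∂P :=
          (lintegral_iSup' hmeas hmono).symm
      _ = m := by
          rw [hm]
          exact lintegral_congr_ae hlim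
  -- from the supremum, get large K values
  have hc : ∀ c : ℝ, 0 < c → ENNReal.ofReal c < m → ∃ M : ℝ, 0 < M ∧ c ≤ K M := by
    intro c hc0 hcm
    rw [← hsupK] at hcm
    obtain ⟨n, hn⟩ := lt_iSup_iff.mp hcm
    have h1 : c < K n := (ENNReal.ofReal_lt_ofReal_iff'.mp hn).1
    have hn0 : (0:ℝ) < (n:ℝ) := by
      by_contra h
      push_neg at h
      have hz : ((n:ℝ)) = 0 := le_antisymm h n.cast_nonneg
      have : K n = 0 := by rw [hKdef]; dsimp only; rw [hz]; simp
      linarith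
    exact ⟨(n:ℝ), hn0, h1.le⟩
  have hRε : ∀ ε : ℝ, 0 < ε → ∃ M : ℝ, 0 < M ∧ 1 / K M ≤ R + ε := by
    intro ε hε
    have hc0 : 0 < 1 / (R + ε) := by positivity
    have hlt : ENNReal.ofReal (1 / (R + ε)) < m := by
      rcases eq_or_ne m ⊤ with hm' | hm'
      · rw [hm']; exact ENNReal.ofReal_lt_top
      · have hm1 : 1 ≤ m := by
          rw [hm]
          have h0 : (1:ℝ≥0∞) = ∫⁻ _ω, 1 ∂P := by simp
          rw [h0]
          apply lintegral_mono_ae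
          filter_upwards [hgs_ae] with ω hω
          rw [ENNReal.one_le_inv]
          exact ENNReal.ofReal_le_one.2 hω.2
        have hmt1 : (1:ℝ) ≤ m.toReal := by
          have h := ENNReal.toReal_mono hm' hm1
          simpa using h
        have hRval : R = m.toReal⁻¹ := by rw [hRdef, ENNReal.toReal_inv]
        have hRpos : 0 < R := by rw [hRval]; positivity
        have h1 : 1 / (R + ε) < m.toReal := by
          rw [hRval]
          calc 1 / (m.toReal⁻¹ + ε) < 1 / m.toReal⁻¹ :=
              one_div_lt_one_div_of_lt (by positivity) (by linarith)
            _ = m.toReal := by rw [one_div, inv_inv]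
        calc ENNReal.ofReal (1 / (R + ε)) < ENNReal.ofReal m.toReal :=
            (ENNReal.ofReal_lt_ofReal_iff (by linarith)).2 h1
          _ = m := ENNReal.ofReal_toReal hm'
    obtain ⟨M, hM0, hcK⟩ := hc _ hc0 hlt
    refine ⟨M, hM0, ?_⟩
    have h2 : 1 / K M ≤ 1 / (1 / (R + ε)) := one_div_le_one_div_of_le hc0 hcK
    rwa [one_div_one_div] at h2
  -- final assembly
  have hfinal : ∀ ε : ℝ, 0 < ε → Filter.limsup
      (fun t : ℝ => (∫ s in (0:ℝ)..t, x s * y s) / ∫ s in (0:ℝ)..t, y s) atTop ≤ R + ε := by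
    intro ε hε
    obtain ⟨M, hM0, hKM⟩ := hRε (ε/2) (by linarith)
    have hkM : 0 < k M := lt_of_lt_of_le (Real.exp_pos _) (hk_lb M hM0.le)
    set C := 1 / k M with hC
    have hCnn : 0 ≤ C := by positivity
    have hKMpos := hK_pos M hM0
    have hev : ∀ᶠ t in atTop,
        (∫ s in (0:ℝ)..t, x s * y s) / (∫ s in (0:ℝ)..t, y s) ≤ 1 / K M + ε/2 := by
      have h2 := hYtop.eventually_ge_atTop (max M (C / (ε/2)))
      filter_upwards [eventually_ge_atTop (0:ℝ), h2] with τ hτ0 hτY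
      have hYM : M ≤ Y τ := le_trans (le_max_left _ _) hτY
      have hYpos : 0 < Y τ := lt_of_lt_of_le hM0 hYM
      rw [hNum τ hτ0, hDen τ hτ0]
      have hmem : Y τ - M ∈ Set.Icc (Y 0) (Y τ) := ⟨by rw [hY0]; linarith, by linarith⟩
      obtain ⟨σ, hσmem, hYσ⟩ := intermediate_value_Icc hτ0 hYc.continuousOn hmem
      have hσ0 : 0 ≤ σ := hσmem.1
      have hστ : σ ≤ τ := hσmem.2
      have hA : K M * X σ ≤ Y τ := hmainchain τ M σ hτ0 hM0 hσ0 hστ hYσ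
      have hB : k M * (X τ - X σ) ≤ 1 := htail τ M σ hτ0 hσ0 hστ (by linarith)
      have hXτ : X τ ≤ Y τ / K M + C := by
        have hXσ : X σ ≤ Y τ / K M := by
          rw [le_div_iff₀ hKMpos]
          nlinarith
        have hXd : X τ - X σ ≤ C := by
          rw [hC, le_div_iff₀ hkM]
          nlinarith
        linarith
      have hKne : K M ≠ 0 := ne_of_gt hKMpos
      have hYne : Y τ ≠ 0 := ne_of_gt hYpos
      calc X τ / Y τ ≤ (Y τ / K M + C) / Y τ := by gcongr
        _ = 1 / K M + C / Y τ := by field_simp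
        _ ≤ 1 / K M + ε/2 := by
            have hCY : C / Y τ ≤ ε/2 := by
              rw [div_le_iff₀ hYpos]
              have h3 : C / (ε/2) ≤ Y τ := le_trans (le_max_right _ _) hτY
              rw [div_le_iff₀ (by linarith : (0:ℝ) < ε/2)] at h3
              nlinarith
            linarith
    apply Filter.limsup_le_of_le hcob
    filter_upwards [hev] with t ht
    exact le_trans ht (by linarith)
  by_contra hcon
  push_neg at hcon
  have hgap : 0 < (Filter.limsup
      (fun t : ℝ => (∫ s in (0:ℝ)..t, x s * y s) / ∫ s in (0:ℝ)..t, y s) atTop - R) / 2 := by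
    linarith
  have := hfinal _ hgap
  linarith

end
end

section
/- Let λ* > 0, let λ̄ : ℝ₊ → [0, λ*] be integrable with R₀ := ∫₀^∞ λ̄(t) dt ∈ (0, ∞), let λ̄₀ : ℝ₊ → ℝ₊ be integrable, let c ∈ [0,1], and let x : ℝ₊ → [0,1] and y : ℝ₊ → [0, λ*] be measurable functions satisfying y(t) = c·λ̄₀(t) + ∫₀ᵗ λ̄(t−s)·x(s) y(s) ds for all t ≥ 0. If ∫₀^∞ y(t) dt = ∞, then (∫₀ᵗ x(s) y(s) ds)/(∫₀ᵗ y(s) ds) → 1/R₀ as t → ∞. -/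
open MeasureTheory Filter Set ProbabilityTheory
open scoped ENNReal

noncomputable section

variable {Ω : Type*} [MeasurableSpace Ω]

lemma aux_intOn {f : ℝ → ℝ} (hf : Measurable f) {a b C : ℝ}
    (hC : ∀ t ∈ Set.Ioc a b, |f t| ≤ C) : IntegrableOn f (Set.Ioc a b) := by
  apply Integrable.mono' (integrable_const C) hf.aestronglyMeasurable
  filter_upwards [ae_restrict_mem measurableSet_Ioc] with t ht
  simpa [Real.norm_eq_abs] using hC t ht

lemma aux_fubini (lamBarF g : ℝ → ℝ) (hl : Measurable lamBarF) (hg : Measurable g)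
    (lamStar : ℝ) (hls : 0 ≤ lamStar)
    (hlb : ∀ t, 0 ≤ t → |lamBarF t| ≤ lamStar) (hgb : ∀ s, 0 ≤ s → |g s| ≤ lamStar)
    {T : ℝ} (hT : 0 ≤ T) :
    ((∫ t in Set.Ioc (0:ℝ) T, ∫ s in (0:ℝ)..t, lamBarF (t - s) * g s)
      = ∫ s in Set.Ioc (0:ℝ) T, g s * ∫ u in (0:ℝ)..(T - s), lamBarF u)
    ∧ IntegrableOn (fun s => g s * ∫ u in (0:ℝ)..(T - s), lamBarF u) (Set.Ioc (0:ℝ) T) := by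
  set F : ℝ × ℝ → ℝ := fun p => if p.2 ≤ p.1 then lamBarF (p.1 - p.2) * g p.2 else 0 with hFdef
  have hFmeas : Measurable F :=
    Measurable.ite (measurableSet_le measurable_snd measurable_fst)
      ((hl.comp (measurable_fst.sub measurable_snd)).mul (hg.comp measurable_snd))
      measurable_const
  have hFint : Integrable (Function.uncurry fun t s => F (t, s))
      ((volume.restrict (Set.Ioc (0:ℝ) T)).prod (volume.restrict (Set.Ioc (0:ℝ) T))) := by
    rw [Measure.prod_restrict]
    haveI : Fact ((volume.prod volume) (Set.Ioc (0:ℝ) T ×ˢ Set.Ioc (0:ℝ) T) < ⊤) :=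
      ⟨by rw [Measure.prod_prod]; exact ENNReal.mul_lt_top (measure_Ioc_lt_top) (measure_Ioc_lt_top)⟩
    apply Integrable.mono' (integrable_const (lamStar * lamStar)) hFmeas.aestronglyMeasurable
    filter_upwards [ae_restrict_mem (measurableSet_Ioc.prod measurableSet_Ioc)] with p hp
    rcases hp with ⟨hp1, hp2⟩
    simp only [Real.norm_eq_abs, hFdef]
    split_ifs with h
    · rw [abs_mul]
      exact mul_le_mul (hlb _ (by linarith [hp2.1.le])) (hgb _ hp2.1.le) (abs_nonneg _)
        (le_trans (abs_nonneg _) (hlb _ (by linarith [hp2.1.le])))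
    · simpa using mul_nonneg hls hls
  have swap := MeasureTheory.integral_integral_swap hFint
  have hL : ∀ t ∈ Set.Ioc (0:ℝ) T,
      (∫ s in Set.Ioc (0:ℝ) T, F (t, s)) = ∫ s in (0:ℝ)..t, lamBarF (t - s) * g s := by
    intro t ht
    have heq : EqOn (fun s => F (t, s))
        (Set.indicator (Set.Ioc (0:ℝ) t) (fun s => lamBarF (t - s) * g s)) (Set.Ioc (0:ℝ) T) := by
      intro s hs
      simp only [hFdef, Set.indicator_apply, Set.mem_Ioc]
      by_cases h : s ≤ t
      · simp [h, hs.1]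
      · simp [h]
    rw [setIntegral_congr_fun measurableSet_Ioc heq, setIntegral_indicator measurableSet_Ioc,
      Set.Ioc_inter_Ioc, intervalIntegral.integral_of_le ht.1.le, max_self,
      min_eq_right ht.2]
  have hR : ∀ s ∈ Set.Ioc (0:ℝ) T,
      (∫ t in Set.Ioc (0:ℝ) T, F (t, s)) = g s * ∫ u in (0:ℝ)..(T - s), lamBarF u := by
    intro s hs
    have heq : (fun t => F (t, s))
        = Set.indicator (Set.Ici s) (fun t => lamBarF (t - s) * g s) := by
      funext t
      simp [hFdef, Set.indicator_apply]
    rw [heq, setIntegral_indicator measurableSet_Ici]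
    have hset : Set.Ioc (0:ℝ) T ∩ Set.Ici s = Set.Icc s T := by
      ext t; simp only [Set.mem_inter_iff, Set.mem_Ioc, Set.mem_Ici, Set.mem_Icc]
      constructor
      · rintro ⟨⟨_, h2⟩, h3⟩; exact ⟨h3, h2⟩
      · rintro ⟨h1, h2⟩; exact ⟨⟨lt_of_lt_of_le hs.1 h1, h2⟩, h1⟩
    rw [hset, integral_Icc_eq_integral_Ioc, ← intervalIntegral.integral_of_le hs.2]
    have := intervalIntegral.integral_comp_sub_right (fun u => lamBarF u * g s) s (a := s) (b := T)
    simp only [sub_self] at this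
    rw [this, intervalIntegral.integral_mul_const, mul_comm]
  have key : (∫ t in Set.Ioc (0:ℝ) T, ∫ s in (0:ℝ)..t, lamBarF (t - s) * g s)
      = ∫ s in Set.Ioc (0:ℝ) T, g s * ∫ u in (0:ℝ)..(T - s), lamBarF u := by
    rw [← setIntegral_congr_fun measurableSet_Ioc (fun t ht => hL t ht),
      ← setIntegral_congr_fun measurableSet_Ioc (fun s hs => hR s hs)]
    exact swap
  refine ⟨key, ?_⟩
  have hint := hFint.integral_prod_right
  simp only [Function.uncurry_apply_pair] at hint
  exact hint.congr ((ae_restrict_iff' measurableSet_Ioc).2 (ae_of_all _ fun s hs => hR s hs))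


/-- For bounded solutions of the renewal equation
`y = c λ̄₀ + λ̄ ⋆ (x y)` with `∫₀^∞ y = ∞`, one has
`(∫₀ᵗ x y)/(∫₀ᵗ y) → 1/R₀` as `t → ∞`. -/
theorem ratio_tendsto_inv_R0
    (lamStar : ℝ) (hls : 0 < lamStar)
    (lamBarF lamBar0F x y : ℝ → ℝ)
    (hlb_meas : Measurable lamBarF) (hlb0_meas : Measurable lamBar0F)
    (hx : Measurable x) (hy : Measurable y)
    (hlb_range : ∀ t : ℝ, 0 ≤ t → lamBarF t ∈ Set.Icc 0 lamStar)
    (hlb_int : IntegrableOn lamBarF (Set.Ioi 0))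
    (hlb0_nn : ∀ t : ℝ, 0 ≤ t → 0 ≤ lamBar0F t)
    (hlb0_int : IntegrableOn lamBar0F (Set.Ioi 0))
    (R0 : ℝ) (hR0def : R0 = ∫ t in Set.Ioi (0:ℝ), lamBarF t) (hR0pos : 0 < R0)
    (c : ℝ) (hc : c ∈ Set.Icc (0:ℝ) 1)
    (hxr : ∀ t : ℝ, 0 ≤ t → x t ∈ Set.Icc (0:ℝ) 1)
    (hyr : ∀ t : ℝ, 0 ≤ t → y t ∈ Set.Icc 0 lamStar)
    (heq : ∀ t : ℝ, 0 ≤ t →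
      y t = c * lamBar0F t + ∫ s in (0:ℝ)..t, lamBarF (t - s) * (x s * y s))
    (hdiv : (∫⁻ t in Set.Ioi (0:ℝ), ENNReal.ofReal (y t)) = ⊤) :
    Tendsto (fun t : ℝ => (∫ s in (0:ℝ)..t, x s * y s) / ∫ s in (0:ℝ)..t, y s)
      atTop (nhds (1 / R0)) := by
  have hxy_meas : Measurable fun s => x s * y s := hx.mul hy
  have hxy_nn : ∀ s, 0 ≤ s → 0 ≤ x s * y s := fun s hs => mul_nonneg (hxr s hs).1 (hyr s hs).1
  have hxy_le : ∀ s, 0 ≤ s → x s * y s ≤ lamStar := fun s hs => by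
    calc x s * y s ≤ 1 * lamStar :=
          mul_le_mul (hxr s hs).2 (hyr s hs).2 (hyr s hs).1 zero_le_one
      _ = lamStar := one_mul _
  have hxy_le_y : ∀ s, 0 ≤ s → x s * y s ≤ y s := fun s hs => by
    nlinarith [(hxr s hs).1, (hxr s hs).2, (hyr s hs).1]
  have hxy_abs : ∀ s, 0 ≤ s → |x s * y s| ≤ lamStar := fun s hs => by
    rw [abs_of_nonneg (hxy_nn s hs)]; exact hxy_le s hs
  have hlb_abs : ∀ t, 0 ≤ t → |lamBarF t| ≤ lamStar := fun t ht => by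
    rw [abs_of_nonneg (hlb_range t ht).1]; exact (hlb_range t ht).2
  have hy_abs : ∀ t, 0 ≤ t → |y t| ≤ lamStar := fun t ht => by
    rw [abs_of_nonneg (hyr t ht).1]; exact (hyr t ht).2
  -- integrability on Ioc 0 T
  have hyInt : ∀ T : ℝ, IntegrableOn y (Set.Ioc 0 T) := fun T =>
    aux_intOn hy (fun t ht => hy_abs t ht.1.le)
  have hxyInt : ∀ T : ℝ, IntegrableOn (fun s => x s * y s) (Set.Ioc 0 T) := fun T =>
    aux_intOn hxy_meas (fun t ht => hxy_abs t ht.1.le)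
  have hl0Int : ∀ T : ℝ, IntegrableOn lamBar0F (Set.Ioc 0 T) := fun T =>
    hlb0_int.mono_set Set.Ioc_subset_Ioi_self
  -- the tail function G
  set G : ℝ → ℝ := fun M => ∫ u in Set.Ioi M, lamBarF u with hGdef
  have hGnn : ∀ M, 0 ≤ M → 0 ≤ G M := fun M hM =>
    setIntegral_nonneg measurableSet_Ioi fun u hu => (hlb_range u (le_trans hM (le_of_lt hu))).1
  have hsplit : ∀ v : ℝ, 0 ≤ v → R0 = (∫ u in Set.Ioc 0 v, lamBarF u) + G v := by
    intro v hv
    rw [hR0def, ← Set.Ioc_union_Ioi_eq_Ioi hv]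
    exact setIntegral_union (Set.Ioc_disjoint_Ioi le_rfl) measurableSet_Ioi
      (aux_intOn hlb_meas fun t ht => hlb_abs t ht.1.le) (hlb_int.mono_set (Set.Ioi_subset_Ioi hv))
  have hGmono : ∀ M N : ℝ, 0 ≤ M → M ≤ N → G N ≤ G M := by
    intro M N hM hMN
    apply setIntegral_mono_set (hlb_int.mono_set (Set.Ioi_subset_Ioi hM))
    · filter_upwards [ae_restrict_mem measurableSet_Ioi] with t ht
      exact (hlb_range t (le_trans hM ht.le)).1
    · exact (Set.Ioi_subset_Ioi hMN).eventuallyLE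
  have hGtend : Tendsto G atTop (nhds 0) := by
    have h1 : Tendsto (fun v => ∫ u in (0:ℝ)..v, lamBarF u) atTop (nhds R0) := by
      rw [hR0def]
      exact intervalIntegral_tendsto_integral_Ioi 0 hlb_int tendsto_id
    have h2 : Tendsto (fun v => R0 - ∫ u in (0:ℝ)..v, lamBarF u) atTop (nhds (R0 - R0)) :=
      (tendsto_const_nhds).sub h1
    rw [sub_self] at h2
    apply h2.congr'
    filter_upwards [eventually_ge_atTop (0:ℝ)] with v hv
    rw [intervalIntegral.integral_of_le hv]
    linarith [hsplit v hv]
  -- main identity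
  have hId : ∀ T : ℝ, 0 ≤ T → (∫ t in Set.Ioc (0:ℝ) T, y t)
      = c * (∫ t in Set.Ioc (0:ℝ) T, lamBar0F t)
        + ∫ s in Set.Ioc (0:ℝ) T, (x s * y s) * ∫ u in (0:ℝ)..(T - s), lamBarF u := by
    intro T hT
    have hfub := aux_fubini lamBarF (fun s => x s * y s) hlb_meas hxy_meas lamStar hls.le
      hlb_abs hxy_abs hT
    have hinner_int : IntegrableOn
        (fun t => ∫ s in (0:ℝ)..t, lamBarF (t - s) * (x s * y s)) (Set.Ioc 0 T) := by
      apply ((hyInt T).sub ((hl0Int T).const_mul c)).congr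
      apply (ae_restrict_iff' measurableSet_Ioc).2
      filter_upwards with t ht
      have := heq t ht.1.le
      simp only [Pi.sub_apply]
      linarith
    have e1 : (∫ t in Set.Ioc (0:ℝ) T, y t)
        = ∫ t in Set.Ioc (0:ℝ) T,
            (c * lamBar0F t + ∫ s in (0:ℝ)..t, lamBarF (t - s) * (x s * y s)) :=
      setIntegral_congr_fun measurableSet_Ioc (fun t ht => heq t ht.1.le)
    rw [e1, integral_add ((hl0Int T).const_mul c) hinner_int, integral_const_mul, hfub.1]
  -- Y tends to infinity
  have hYmono : ∀ a b : ℝ, a ≤ b →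
      (∫ t in Set.Ioc (0:ℝ) a, y t) ≤ ∫ t in Set.Ioc (0:ℝ) b, y t := by
    intro a b hab
    apply setIntegral_mono_set (hyInt b)
    · filter_upwards [ae_restrict_mem measurableSet_Ioc] with t ht
      exact (hyr t ht.1.le).1
    · exact (Set.Ioc_subset_Ioc_right hab).eventuallyLE
  have hYtop : Tendsto (fun T => ∫ t in Set.Ioc (0:ℝ) T, y t) atTop atTop := by
    rw [tendsto_atTop_atTop]
    intro b
    have hwd : ∀ s : Set ℝ, MeasurableSet s →
        (volume.withDensity fun t => ENNReal.ofReal (y t)) s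
          = ∫⁻ t in s, ENNReal.ofReal (y t) := fun s hs =>
      withDensity_apply _ hs
    have hUnion : (⋃ n : ℕ, Set.Ioc (0:ℝ) n) = Set.Ioi (0:ℝ) := by
      ext t
      simp only [Set.mem_iUnion, Set.mem_Ioc, Set.mem_Ioi]
      constructor
      · rintro ⟨n, h1, _⟩; exact h1
      · intro h
        obtain ⟨n, hn⟩ := exists_nat_ge t
        exact ⟨n, h, hn⟩
    have hmon : Monotone (fun n : ℕ => Set.Ioc (0:ℝ) n) := fun m n hmn =>
      Set.Ioc_subset_Ioc_right (by exact_mod_cast hmn)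
    have htop : (⨆ n : ℕ, (volume.withDensity fun t => ENNReal.ofReal (y t)) (Set.Ioc (0:ℝ) n)) = ⊤ := by
      have h2 := hmon.measure_iUnion (μ := volume.withDensity fun t => ENNReal.ofReal (y t))
      rw [hUnion, hwd _ measurableSet_Ioi, hdiv] at h2
      exact h2.symm
    obtain ⟨n, hn⟩ : ∃ n : ℕ, ENNReal.ofReal b
        < (volume.withDensity fun t => ENNReal.ofReal (y t)) (Set.Ioc (0:ℝ) n) := by
      by_contra hcon
      push_neg at hcon
      have hle := iSup_le hcon
      rw [htop] at hle
      exact absurd hle (not_le.2 ENNReal.ofReal_lt_top)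
    have hofReal : (∫⁻ t in Set.Ioc (0:ℝ) n, ENNReal.ofReal (y t))
        = ENNReal.ofReal (∫ t in Set.Ioc (0:ℝ) n, y t) := by
      rw [← ofReal_integral_eq_lintegral_ofReal (hyInt n)]
      filter_upwards [ae_restrict_mem measurableSet_Ioc] with t ht
      exact (hyr t ht.1.le).1
    rw [hwd _ measurableSet_Ioc, hofReal] at hn
    refine ⟨n, fun T hT => ?_⟩
    have hbn : b ≤ ∫ t in Set.Ioc (0:ℝ) n, y t := by
      by_contra hcon
      push_neg at hcon
      exact absurd (ENNReal.ofReal_le_ofReal hcon.le) (not_le.2 hn)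
    exact le_trans hbn (hYmono n T hT)
  -- G at 0
  have hG0 : G 0 = R0 := by
    have := hsplit 0 le_rfl
    rw [Set.Ioc_self] at this
    simp only [Measure.restrict_empty, integral_zero_measure] at this
    linarith
  -- K identity
  have hK : ∀ T s : ℝ, s ≤ T → (∫ u in (0:ℝ)..(T - s), lamBarF u) = R0 - G (T - s) := by
    intro T s hsT
    rw [intervalIntegral.integral_of_le (by linarith)]
    linarith [hsplit (T - s) (by linarith)]
  -- A bounds
  have hAinf_nn : 0 ≤ ∫ t in Set.Ioi (0:ℝ), lamBar0F t :=
    setIntegral_nonneg measurableSet_Ioi fun t ht => hlb0_nn t ht.le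
  have hcA : ∀ T : ℝ, 0 ≤ T → 0 ≤ c * (∫ t in Set.Ioc (0:ℝ) T, lamBar0F t) ∧
      c * (∫ t in Set.Ioc (0:ℝ) T, lamBar0F t) ≤ ∫ t in Set.Ioi (0:ℝ), lamBar0F t := by
    intro T hT
    have h1 : 0 ≤ ∫ t in Set.Ioc (0:ℝ) T, lamBar0F t :=
      setIntegral_nonneg measurableSet_Ioc fun t ht => hlb0_nn t ht.1.le
    have h2 : (∫ t in Set.Ioc (0:ℝ) T, lamBar0F t) ≤ ∫ t in Set.Ioi (0:ℝ), lamBar0F t := by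
      apply setIntegral_mono_set hlb0_int
      · filter_upwards [ae_restrict_mem measurableSet_Ioi] with t ht using hlb0_nn t ht.le
      · exact Set.Ioc_subset_Ioi_self.eventuallyLE
    exact ⟨mul_nonneg hc.1 h1, by nlinarith [hc.1, hc.2]⟩
  -- main bounds
  have hEbound : ∀ M T : ℝ, 0 ≤ M → M ≤ T →
      ((∫ t in Set.Ioc (0:ℝ) T, y t) ≤ c * (∫ t in Set.Ioc (0:ℝ) T, lamBar0F t)
          + R0 * ∫ s in Set.Ioc (0:ℝ) T, x s * y s)
      ∧ (R0 * ∫ s in Set.Ioc (0:ℝ) T, x s * y s)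
          ≤ ((∫ t in Set.Ioc (0:ℝ) T, y t) - c * (∫ t in Set.Ioc (0:ℝ) T, lamBar0F t))
            + (G M * ∫ s in Set.Ioc (0:ℝ) T, x s * y s) + lamStar * R0 * M := by
    intro M T hM hMT
    have hT : 0 ≤ T := le_trans hM hMT
    have hfub2 := (aux_fubini lamBarF (fun s => x s * y s) hlb_meas hxy_meas lamStar hls.le
      hlb_abs hxy_abs hT).2
    have hKle : ∀ s ∈ Set.Ioc (0:ℝ) T, (∫ u in (0:ℝ)..(T - s), lamBarF u) ≤ R0 := fun s hs => by
      rw [hK T s hs.2]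
      linarith [hGnn (T - s) (by linarith [hs.2])]
    have hKnn : ∀ s ∈ Set.Ioc (0:ℝ) T, 0 ≤ ∫ u in (0:ℝ)..(T - s), lamBarF u := fun s hs => by
      rw [hK T s hs.2]
      linarith [hGmono 0 (T - s) le_rfl (by linarith [hs.2]), hG0]
    have hZR : (R0 * ∫ s in Set.Ioc (0:ℝ) T, x s * y s)
        = ∫ s in Set.Ioc (0:ℝ) T, x s * y s * R0 := by
      rw [MeasureTheory.integral_mul_const, mul_comm]
    have part1 : (∫ s in Set.Ioc (0:ℝ) T, x s * y s * ∫ u in (0:ℝ)..(T - s), lamBarF u)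
        ≤ ∫ s in Set.Ioc (0:ℝ) T, x s * y s * R0 :=
      setIntegral_mono_on hfub2 ((hxyInt T).mul_const R0) measurableSet_Ioc
        (fun s hs => mul_le_mul_of_nonneg_left (hKle s hs) (hxy_nn s hs.1.le))
    have hvle : T - M ≤ T := by linarith
    have hv0 : (0:ℝ) ≤ T - M := by linarith
    have hDint : IntegrableOn (fun s => x s * y s * R0
        - x s * y s * ∫ u in (0:ℝ)..(T - s), lamBarF u) (Set.Ioc 0 T) :=
      ((hxyInt T).mul_const R0).sub hfub2
    have hunion : Set.Ioc (0:ℝ) (T - M) ∪ Set.Ioc (T - M) T = Set.Ioc (0:ℝ) T :=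
      Set.Ioc_union_Ioc_eq_Ioc hv0 hvle
    have hDsplit : (∫ s in Set.Ioc (0:ℝ) T, (x s * y s * R0
          - x s * y s * ∫ u in (0:ℝ)..(T - s), lamBarF u))
        = (∫ s in Set.Ioc (0:ℝ) (T - M), (x s * y s * R0
          - x s * y s * ∫ u in (0:ℝ)..(T - s), lamBarF u))
          + ∫ s in Set.Ioc (T - M) T, (x s * y s * R0
          - x s * y s * ∫ u in (0:ℝ)..(T - s), lamBarF u) := by
      rw [← hunion]
      exact setIntegral_union (Set.Ioc_disjoint_Ioc_of_le le_rfl) measurableSet_Ioc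
        (hDint.mono_set (hunion ▸ Set.subset_union_left))
        (hDint.mono_set (hunion ▸ Set.subset_union_right))
    have hp1 : (∫ s in Set.Ioc (0:ℝ) (T - M), (x s * y s * R0
          - x s * y s * ∫ u in (0:ℝ)..(T - s), lamBarF u))
        ≤ ∫ s in Set.Ioc (0:ℝ) (T - M), x s * y s * G M := by
      apply setIntegral_mono_on (hDint.mono_set (hunion ▸ Set.subset_union_left))
        ((hxyInt (T - M)).mul_const (G M)) measurableSet_Ioc
      intro s hs
      have hsT : s ≤ T := le_trans hs.2 hvle
      rw [hK T s hsT]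
      have h1 := hGmono M (T - s) hM (by linarith [hs.2])
      nlinarith [hxy_nn s hs.1.le]
    have hp1' : (∫ s in Set.Ioc (0:ℝ) (T - M), x s * y s * G M)
        ≤ (∫ s in Set.Ioc (0:ℝ) T, x s * y s) * G M := by
      rw [MeasureTheory.integral_mul_const]
      apply mul_le_mul_of_nonneg_right _ (hGnn M hM)
      apply setIntegral_mono_set (hxyInt T)
      · filter_upwards [ae_restrict_mem measurableSet_Ioc] with s hs using hxy_nn s hs.1.le
      · exact (Set.Ioc_subset_Ioc_right hvle).eventuallyLE
    have hp2 : (∫ s in Set.Ioc (T - M) T, (x s * y s * R0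
          - x s * y s * ∫ u in (0:ℝ)..(T - s), lamBarF u)) ≤ lamStar * R0 * M := by
      have hb : ∀ s ∈ Set.Ioc (T - M) T, (x s * y s * R0
          - x s * y s * ∫ u in (0:ℝ)..(T - s), lamBarF u) ≤ lamStar * R0 := by
        intro s hs
        have hs0 : (0:ℝ) < s := lt_of_le_of_lt hv0 hs.1
        have h1 := hKnn s ⟨hs0, hs.2⟩
        have h2 := hKle s ⟨hs0, hs.2⟩
        nlinarith [hxy_nn s hs0.le, hxy_le s hs0.le]
      calc (∫ s in Set.Ioc (T - M) T, (x s * y s * R0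
          - x s * y s * ∫ u in (0:ℝ)..(T - s), lamBarF u))
            ≤ ∫ _s in Set.Ioc (T - M) T, lamStar * R0 :=
            setIntegral_mono_on (hDint.mono_set (hunion ▸ Set.subset_union_right))
              (integrableOn_const measure_Ioc_lt_top.ne) measurableSet_Ioc hb
        _ = lamStar * R0 * M := by
            rw [setIntegral_const, Real.volume_real_Ioc_of_le (by linarith), smul_eq_mul]
            ring
    have hDtot : (∫ s in Set.Ioc (0:ℝ) T, (x s * y s * R0
          - x s * y s * ∫ u in (0:ℝ)..(T - s), lamBarF u))
        = (∫ s in Set.Ioc (0:ℝ) T, x s * y s * R0)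
          - ∫ s in Set.Ioc (0:ℝ) T, x s * y s * ∫ u in (0:ℝ)..(T - s), lamBarF u :=
      integral_sub ((hxyInt T).mul_const R0) hfub2
    have hIdT := hId T hT
    have hcm : (∫ s in Set.Ioc (0:ℝ) T, x s * y s) * G M
        = G M * ∫ s in Set.Ioc (0:ℝ) T, x s * y s := mul_comm _ _
    constructor
    · rw [hZR]; linarith [part1]
    · rw [hZR]; linarith [hDsplit, hp1, hp1', hp2, hDtot]
  -- final epsilon-delta argument
  rw [Metric.tendsto_atTop]
  intro ε hε
  obtain ⟨M, hMlt, hMge⟩ :=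
    ((hGtend.eventually_lt_const (show (0:ℝ) < R0 * ε / 2 by positivity)).and
      (eventually_ge_atTop (0:ℝ))).exists
  set Ainf := ∫ t in Set.Ioi (0:ℝ), lamBar0F t with hAdef
  set C := lamStar * R0 * M + Ainf with hCdef
  have hM0 : 0 ≤ lamStar * R0 * M := by positivity
  have hC : 0 ≤ C := by simp only [hCdef]; linarith
  rw [tendsto_atTop_atTop] at hYtop
  obtain ⟨N0, hN0⟩ := hYtop (2 * C / (R0 * ε) + 1)
  refine ⟨max N0 M, fun T hT => ?_⟩
  have hTM : M ≤ T := le_trans (le_max_right _ _) hT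
  have hT0 : 0 ≤ T := le_trans hMge hTM
  have hYT := hN0 T (le_trans (le_max_left _ _) hT)
  have hdivnn : 0 ≤ 2 * C / (R0 * ε) := by positivity
  obtain ⟨h1, h2⟩ := hEbound M T hMge hTM
  obtain ⟨hcA1, hcA2⟩ := hcA T hT0
  have hZ'nn : 0 ≤ ∫ s in Set.Ioc (0:ℝ) T, x s * y s :=
    setIntegral_nonneg measurableSet_Ioc fun s hs => hxy_nn s hs.1.le
  have hZ'Y' : (∫ s in Set.Ioc (0:ℝ) T, x s * y s) ≤ ∫ t in Set.Ioc (0:ℝ) T, y t :=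
    setIntegral_mono_on (hxyInt T) (hyInt T) measurableSet_Ioc
      fun s hs => hxy_le_y s hs.1.le
  have hY'pos : 0 < ∫ t in Set.Ioc (0:ℝ) T, y t := by linarith
  have hB : 2 * C < R0 * ε * ∫ t in Set.Ioc (0:ℝ) T, y t := by
    have hpos : (0:ℝ) < R0 * ε := by positivity
    have h3 := mul_le_mul_of_nonneg_left hYT hpos.le
    have h4 : R0 * ε * (2 * C / (R0 * ε) + 1) = 2 * C + R0 * ε := by
      field_simp
    linarith
  have e1 : G M * (∫ t in Set.Ioc (0:ℝ) T, y t)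
      ≤ R0 * ε * (∫ t in Set.Ioc (0:ℝ) T, y t) / 2 := by
    have := mul_le_mul_of_nonneg_right hMlt.le hY'pos.le
    linarith [this]
  have em : G M * (∫ s in Set.Ioc (0:ℝ) T, x s * y s)
      ≤ G M * ∫ t in Set.Ioc (0:ℝ) T, y t :=
    mul_le_mul_of_nonneg_left hZ'Y' (hGnn M hMge)
  rw [intervalIntegral.integral_of_le hT0, intervalIntegral.integral_of_le hT0,
    Real.dist_eq, div_sub_div _ _ (ne_of_gt hY'pos) (ne_of_gt hR0pos), mul_one, abs_div,
    abs_of_pos (mul_pos hY'pos hR0pos), div_lt_iff₀ (mul_pos hY'pos hR0pos)]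
  have hat : ε * ((∫ t in Set.Ioc (0:ℝ) T, y t) * R0)
      = R0 * ε * (∫ t in Set.Ioc (0:ℝ) T, y t) := by ring
  have hcm2 : R0 * (∫ s in Set.Ioc (0:ℝ) T, x s * y s)
      = (∫ s in Set.Ioc (0:ℝ) T, x s * y s) * R0 := mul_comm _ _
  rw [abs_lt]
  constructor
  · linarith
  · linarith


end
end

section
/- Let η and θ be nonnegative integrable random variables with 𝔼[η] + 𝔼[θ] > 0, set γ(t) := 1{t ≥ η + θ} (so that γ* = 1 a.s.), and let R₀ ∈ (1, ∞). Then the equation ∫₀^∞ 𝔼[exp(−∫₀ˢ γ(r/x) dr)] ds = R₀ has a unique positive solution, given by x* = (R₀ − 1)/(𝔼[η] + 𝔼[θ]); and the corresponding endemic value Ī* := 𝔼[η]·x*/R₀ equals (𝔼[η]/(𝔼[η] + 𝔼[θ]))·(1 − 1/R₀). -/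
open MeasureTheory Filter Set ProbabilityTheory
open scoped ENNReal

noncomputable section

variable {Ω : Type*} [MeasurableSpace Ω]

lemma SIRS_aux_L1 (b s : ℝ) (hb : 0 ≤ b) (hs : 0 ≤ s) :
    (∫ r in (0:ℝ)..s, (if b ≤ r then (1:ℝ) else 0)) = max (s - b) 0 := by
  rw [intervalIntegral.integral_of_le hs]
  have hind : ∀ r : ℝ, (if b ≤ r then (1:ℝ) else 0) = (Set.Ici b).indicator (fun _ => (1:ℝ)) r := by
    intro r; simp [Set.indicator, Set.mem_Ici]
  simp only [hind]
  rw [MeasureTheory.setIntegral_indicator measurableSet_Ici, MeasureTheory.setIntegral_const]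
  by_cases hbs : b ≤ s
  · have h1 : Set.Ioc b s ⊆ Set.Ioc 0 s ∩ Set.Ici b :=
      fun r hr => ⟨⟨lt_of_le_of_lt hb hr.1, hr.2⟩, le_of_lt hr.1⟩
    have h2 : Set.Ioc 0 s ∩ Set.Ici b ⊆ Set.Icc b s := fun r hr => ⟨hr.2, hr.1.2⟩
    have hvol : volume (Set.Ioc 0 s ∩ Set.Ici b) = ENNReal.ofReal (s - b) := by
      refine le_antisymm ?_ ?_
      · calc volume (Set.Ioc 0 s ∩ Set.Ici b) ≤ volume (Set.Icc b s) := measure_mono h2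
          _ = ENNReal.ofReal (s - b) := Real.volume_Icc
      · calc ENNReal.ofReal (s - b) = volume (Set.Ioc b s) := Real.volume_Ioc.symm
          _ ≤ _ := measure_mono h1
    rw [measureReal_def, hvol, ENNReal.toReal_ofReal (by linarith), smul_eq_mul, mul_one,
      max_eq_left (by linarith)]
  · have hempty : Set.Ioc 0 s ∩ Set.Ici b = ∅ := by
      ext r; simp only [Set.mem_inter_iff, Set.mem_Ioc, Set.mem_Ici, Set.mem_empty_iff_false,
        iff_false]
      rintro ⟨⟨_, hrs⟩, hbr⟩; exact hbs (le_trans hbr hrs)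
    rw [hempty]
    simp [max_eq_right (by linarith : s - b ≤ 0)]

lemma SIRS_aux_L2int (c : ℝ) (hc : 0 ≤ c) :
    IntegrableOn (fun s => Real.exp (-(max (s - c) 0))) (Set.Ioi 0) := by
  rw [← Set.Ioc_union_Ioi_eq_Ioi hc]
  apply MeasureTheory.IntegrableOn.union
  · refine MeasureTheory.Integrable.mono' (integrable_const 1) ?_ ?_
    · exact (((measurable_id.sub measurable_const).max measurable_const).neg.exp).aestronglyMeasurable
    · refine Filter.Eventually.of_forall fun s => ?_
      rw [Real.norm_eq_abs, abs_of_pos (Real.exp_pos _)]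
      exact Real.exp_le_one_iff.2 (neg_nonpos.2 (le_max_right _ _))
  · have hbase : IntegrableOn (fun s => Real.exp c * Real.exp (-1 * s)) (Set.Ioi c) :=
      (exp_neg_integrableOn_Ioi c one_pos).const_mul _
    refine hbase.congr_fun ?_ measurableSet_Ioi
    intro s hs
    have hcs : c < s := hs
    dsimp only
    rw [max_eq_left (by linarith : (0:ℝ) ≤ s - c), ← Real.exp_add]
    congr 1; ring

lemma SIRS_aux_L2 (c : ℝ) (hc : 0 ≤ c) :
    ∫ s in Set.Ioi (0:ℝ), Real.exp (-(max (s - c) 0)) = c + 1 := by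
  have hI := SIRS_aux_L2int c hc
  rw [← Set.Ioc_union_Ioi_eq_Ioi hc] at hI ⊢
  rw [MeasureTheory.setIntegral_union (Set.Ioc_disjoint_Ioi le_rfl) measurableSet_Ioi
    (hI.mono_set Set.subset_union_left) (hI.mono_set Set.subset_union_right)]
  have h1 : ∫ s in Set.Ioc (0:ℝ) c, Real.exp (-(max (s - c) 0)) = c := by
    rw [MeasureTheory.setIntegral_congr_fun measurableSet_Ioc
      (fun s hs => by rw [max_eq_right (by simp at hs; linarith : s - c ≤ 0), neg_zero, Real.exp_zero])]
    simp [Real.volume_Ioc, ENNReal.toReal_ofReal hc, hc]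
  have h2 : ∫ s in Set.Ioi c, Real.exp (-(max (s - c) 0)) = 1 := by
    have heq : Set.EqOn (fun s => Real.exp (-(max (s - c) 0)))
        (fun s => Real.exp c * Real.exp (-s)) (Set.Ioi c) := by
      intro s hs
      have hcs : c < s := hs
      dsimp only
      rw [max_eq_left (by linarith : (0:ℝ) ≤ s - c), ← Real.exp_add]
      congr 1; ring
    rw [MeasureTheory.setIntegral_congr_fun measurableSet_Ioi heq,
      MeasureTheory.integral_const_mul, integral_exp_neg_Ioi, ← Real.exp_add, add_neg_cancel,
      Real.exp_zero]
  rw [h1, h2]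

lemma SIRS_aux_Hval {Ω : Type*} [MeasurableSpace Ω] (P : Measure Ω) [IsProbabilityMeasure P]
    (etaV theta : Ω → ℝ) (heta : Measurable etaV) (htheta : Measurable theta)
    (hnn : ∀ᵐ ω ∂P, 0 ≤ etaV ω ∧ 0 ≤ theta ω)
    (heta_int : Integrable etaV P) (htheta_int : Integrable theta P)
    (x : ℝ) (hx : 0 < x) :
    (∫ s in Set.Ioi (0:ℝ), ∫ ω,
        Real.exp (- ∫ r in (0:ℝ)..s,
          (if etaV ω + theta ω ≤ r / x then (1:ℝ) else 0)) ∂P)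
      = x * ((∫ ω, etaV ω ∂P) + ∫ ω, theta ω ∂P) + 1 := by
  set c : Ω → ℝ := fun ω => x * (etaV ω + theta ω) with hc_def
  have hc_meas : Measurable c := (heta.add htheta).const_mul x
  have hc_int : Integrable c P := (heta_int.add htheta_int).const_mul x
  have hc_nn : ∀ᵐ ω ∂P, 0 ≤ c ω := by
    filter_upwards [hnn] with ω hω
    exact mul_nonneg hx.le (add_nonneg hω.1 hω.2)
  have step1 : Set.EqOn
      (fun s => ∫ ω, Real.exp (- ∫ r in (0:ℝ)..s,
          (if etaV ω + theta ω ≤ r / x then (1:ℝ) else 0)) ∂P)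
      (fun s => ∫ ω, Real.exp (-(max (s - c ω) 0)) ∂P) (Set.Ioi 0) := by
    intro s hs
    have hs0 : (0:ℝ) ≤ s := le_of_lt hs
    dsimp only
    apply integral_congr_ae
    filter_upwards [hnn] with ω hω
    have hcond : ∀ r : ℝ, (if etaV ω + theta ω ≤ r / x then (1:ℝ) else 0)
        = (if c ω ≤ r then (1:ℝ) else 0) := by
      intro r
      simp only [hc_def, le_div_iff₀ hx, mul_comm]
    have : (∫ r in (0:ℝ)..s, (if etaV ω + theta ω ≤ r / x then (1:ℝ) else 0))
        = max (s - c ω) 0 := by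
      simp only [hcond]
      exact SIRS_aux_L1 _ _ (mul_nonneg hx.le (add_nonneg hω.1 hω.2)) hs0
    rw [this]
  rw [MeasureTheory.setIntegral_congr_fun measurableSet_Ioi step1]
  have hmeas : AEStronglyMeasurable (Function.uncurry fun (ω : Ω) (s : ℝ) =>
      Real.exp (-(max (s - c ω) 0))) (P.prod (volume.restrict (Set.Ioi 0))) := by
    apply Measurable.aestronglyMeasurable
    exact (((measurable_snd.sub (hc_meas.comp measurable_fst)).max measurable_const).neg).exp
  have hint_slice : ∀ᵐ ω ∂P, Integrable (fun s => Real.exp (-(max (s - c ω) 0)))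
      (volume.restrict (Set.Ioi 0)) := by
    filter_upwards [hc_nn] with ω h using SIRS_aux_L2int _ h
  have hub : Integrable (fun ω => ∫ s in Set.Ioi (0:ℝ),
      ‖Real.exp (-(max (s - c ω) 0))‖) P := by
    refine (hc_int.add (integrable_const 1)).congr ?_
    filter_upwards [hc_nn] with ω h
    have : ∀ s : ℝ, ‖Real.exp (-(max (s - c ω) 0))‖ = Real.exp (-(max (s - c ω) 0)) :=
      fun s => by rw [Real.norm_eq_abs, abs_of_pos (Real.exp_pos _)]
    simp only [this]
    exact (SIRS_aux_L2 _ h).symm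
  have hprod : Integrable (Function.uncurry fun (ω : Ω) (s : ℝ) =>
      Real.exp (-(max (s - c ω) 0))) (P.prod (volume.restrict (Set.Ioi 0))) :=
    (MeasureTheory.integrable_prod_iff hmeas).2 ⟨hint_slice, hub⟩
  rw [← MeasureTheory.integral_integral_swap hprod]
  have : ∫ ω, (∫ s in Set.Ioi (0:ℝ), Real.exp (-(max (s - c ω) 0))) ∂P
      = ∫ ω, (c ω + 1) ∂P := by
    apply integral_congr_ae
    filter_upwards [hc_nn] with ω h using SIRS_aux_L2 _ h
  rw [this, MeasureTheory.integral_add hc_int (integrable_const 1), integral_const,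
    measureReal_def, measure_univ, ENNReal.toReal_one, one_smul, hc_def]
  rw [MeasureTheory.integral_const_mul, MeasureTheory.integral_add heta_int htheta_int]

/-- SIRS specialization: with `γ(t) = 1_{t ≥ η + θ}` and `R₀ ∈ (1, ∞)`,
the equation `∫₀^∞ 𝔼[exp(−∫₀ˢ γ(r/x) dr)] ds = R₀` has the unique positive solution
`x* = (R₀ − 1)/(𝔼[η] + 𝔼[θ])`, and `Ī* = 𝔼[η] x* / R₀ = (𝔼[η]/(𝔼[η]+𝔼[θ]))(1 − 1/R₀)`. -/
theorem SIRS_endemic_equilibrium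
    {Ω : Type*} [MeasurableSpace Ω] (P : Measure Ω) [IsProbabilityMeasure P]
    (etaV theta : Ω → ℝ) (heta : Measurable etaV) (htheta : Measurable theta)
    (hnn : ∀ᵐ ω ∂P, 0 ≤ etaV ω ∧ 0 ≤ theta ω)
    (heta_int : Integrable etaV P) (htheta_int : Integrable theta P)
    (hpos : 0 < (∫ ω, etaV ω ∂P) + ∫ ω, theta ω ∂P)
    (R0 : ℝ) (hR0 : 1 < R0)
    (xstar : ℝ)
    (hxstar : xstar = (R0 - 1) / ((∫ ω, etaV ω ∂P) + ∫ ω, theta ω ∂P)) :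
    0 < xstar ∧
    (∫ s in Set.Ioi (0:ℝ), ∫ ω,
        Real.exp (- ∫ r in (0:ℝ)..s,
          (if etaV ω + theta ω ≤ r / xstar then (1:ℝ) else 0)) ∂P) = R0 ∧
    (∀ y : ℝ, 0 < y →
      (∫ s in Set.Ioi (0:ℝ), ∫ ω,
        Real.exp (- ∫ r in (0:ℝ)..s,
          (if etaV ω + theta ω ≤ r / y then (1:ℝ) else 0)) ∂P) = R0 →
      y = xstar) ∧
    (∫ ω, etaV ω ∂P) * xstar / R0
      = ((∫ ω, etaV ω ∂P) / ((∫ ω, etaV ω ∂P) + ∫ ω, theta ω ∂P)) * (1 - 1 / R0) := by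
  set E := (∫ ω, etaV ω ∂P) + ∫ ω, theta ω ∂P with hE
  have hxpos : 0 < xstar := by
    rw [hxstar]; exact div_pos (by linarith) hpos
  have hR0ne : R0 ≠ 0 := by linarith
  refine ⟨hxpos, ?_, ?_, ?_⟩
  · rw [SIRS_aux_Hval P etaV theta heta htheta hnn heta_int htheta_int xstar hxpos, hxstar]
    field_simp
    rw [← hE]; ring
  · intro y hy hEq
    rw [SIRS_aux_Hval P etaV theta heta htheta hnn heta_int htheta_int y hy] at hEq
    rw [← hE] at hEq
    rw [hxstar, eq_div_iff hpos.ne']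
    linarith
  · rw [hxstar]
    field_simp


end
end
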